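/- arXiv:2302.09798 — 7 statements merged into one kernel-verified Lean document; each statement's English description precedes it below -/
import Mathlib

section
/- Let n ≥ 1 and let x, y be two distinct binary sequences of length n. If |I_1(x) ∩ I_1(y)| = 1, then x and y are Type-B confusable. -/
open List

/-- The `t`-insertion ball of a binary word `x`: all words of length `|x| + t`
containing `x` as a (not necessarily contiguous) subsequence. -/
def insBall (t : ℕ) (x : List Bool) : Set (List Bool) :=
  {z | z.length = x.length + t ∧ x.Sublist z}

/-- Componentwise complement of a binary word. -/
def bcompl (w : List Bool) : List Bool := w.map (fun c => !c)

/-- `wpow p i` is the concatenation of `i` copies of the word `p`. -/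
def wpow (p : List Bool) (i : ℕ) : List Bool := (List.replicate i p).flatten

/-- `w` is an alternating word of length at least 1:
`w = (a ā)^i` with `i ≥ 1`, or `w = (a ā)^j a` with `j ≥ 0`. -/
def IsAlt (w : List Bool) : Prop :=
  ∃ a : Bool, (∃ i, 1 ≤ i ∧ w = wpow [a, !a] i) ∨ (∃ j, w = wpow [a, !a] j ++ [a])

/-- Type-A confusability: `x = u w v`, `y = u w̄ v` for an alternating block `w`. -/
def TypeA (x y : List Bool) : Prop :=
  ∃ u v w : List Bool, IsAlt w ∧ x = u ++ w ++ v ∧ y = u ++ bcompl w ++ v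

/-- Type-B confusability: `{x, y} = {u a ā v b w, u ā v b b̄ w}`. -/
def TypeB (x y : List Bool) : Prop :=
  ∃ (u v w : List Bool) (a b : Bool),
    ({x, y} : Set (List Bool)) =
      {u ++ [a, !a] ++ v ++ [b] ++ w, u ++ [!a] ++ v ++ [b, !b] ++ w}

/-- `p` is a period of `s` : `s_i = s_{i+p}` whenever both indices are in range. -/
def IsPeriodOf (p : ℕ) (s : List Bool) : Prop :=
  ∀ i, i + p < s.length → s.getD i false = s.getD (i + p) false

/-- The (smallest) period of `s` is at most `ℓ`. -/
def PeriodLe (s : List Bool) (ℓ : ℕ) : Prop :=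
  ∃ p, 1 ≤ p ∧ p ≤ ℓ ∧ IsPeriodOf p s

/-- `R(n, ℓ, t)`: binary words of length `n` in which every contiguous subword
of period at most `ℓ` has length at most `t`. -/
def Rset (n ℓ t : ℕ) : Set (List Bool) :=
  {x | x.length = n ∧ ∀ s : List Bool, s <:+: x → PeriodLe s ℓ → s.length ≤ t}

/-- `Inv(x)`: the number of pairs `i < j` with `x_i > x_j` (i.e. `x_i = 1`, `x_j = 0`). -/
def invNum (x : List Bool) : ℕ :=
  ((Finset.range x.length ×ˢ Finset.range x.length).filter
    (fun q => q.1 < q.2 ∧ x.getD q.1 false = true ∧ x.getD q.2 false = false)).card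


lemma lemA {x z : List Bool} (h : x.Sublist z) (hl : z.length = x.length + 1) :
    ∃ (p : List Bool) (d : Bool) (q : List Bool), z = p ++ d :: q ∧ x = p ++ q := by
  induction z generalizing x with
  | nil => simp at hl
  | cons c z' ih =>
    cases h with
    | cons _ h1 =>
      have hx : x = z' := h1.eq_of_length (by simpa using hl.symm)
      exact ⟨[], c, z', by simp, by simp [hx]⟩
    | cons_cons _ h1 =>
      rename_i x1
      obtain ⟨p, d, q, h2, h3⟩ := ih h1 (by simpa using hl)
      exact ⟨c :: p, d, q, by simp [h2], by simp [h3]⟩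

lemma lemL {z x y : List Bool} (hx : x.Sublist z) (hy : y.Sublist z)
    (hlx : z.length = x.length + 1) (hly : z.length = y.length + 1) (hne : x ≠ y) :
    ∃ u s m : List Bool, z = u ++ s ++ m ∧ 2 ≤ s.length ∧
      ((x = u ++ s.tail ++ m ∧ y = u ++ s.dropLast ++ m) ∨
       (y = u ++ s.tail ++ m ∧ x = u ++ s.dropLast ++ m)) := by
  induction z generalizing x y with
  | nil => simp at hlx
  | cons c z' ih =>
    cases hx with
    | cons _ h1 =>
      have hxz : x = z' := h1.eq_of_length (by simpa using hlx.symm)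
      cases hy with
      | cons _ h2 =>
        have hyz : y = z' := h2.eq_of_length (by simpa using hly.symm)
        exact absurd (hxz.trans hyz.symm) hne
      | cons_cons _ h2 =>
        rename_i y1
        obtain ⟨p, d, q, h3, h4⟩ := lemA h2 (by simpa using hly)
        refine ⟨[], c :: (p ++ [d]), q, by simp [h3], by simp, Or.inl ⟨?_, ?_⟩⟩
        · simp [hxz, h3]
        · rw [show c :: (p ++ [d]) = (c :: p) ++ [d] by simp, List.dropLast_concat]
          simp [h4]
    | cons_cons _ h1 =>
      rename_i x1
      cases hy with
      | cons _ h2 =>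
        have hyz : y = z' := h2.eq_of_length (by simpa using hly.symm)
        obtain ⟨p, d, q, h3, h4⟩ := lemA h1 (by simpa using hlx)
        refine ⟨[], c :: (p ++ [d]), q, by simp [h3], by simp, Or.inr ⟨?_, ?_⟩⟩
        · simp [hyz, h3]
        · rw [show c :: (p ++ [d]) = (c :: p) ++ [d] by simp, List.dropLast_concat]
          simp [h4]
      | cons_cons _ h2 =>
        rename_i y1
        have hne' : x1 ≠ y1 := fun hh => hne (by simp [hh])
        obtain ⟨u, s, m, hz, hs, hcase⟩ :=
          ih h1 h2 (by simpa using hlx) (by simpa using hly) hne'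
        refine ⟨c :: u, s, m, by simp [hz], hs, ?_⟩
        rcases hcase with ⟨e1, e2⟩ | ⟨e1, e2⟩
        · exact Or.inl ⟨by simp [e1], by simp [e2]⟩
        · exact Or.inr ⟨by simp [e1], by simp [e2]⟩

lemma lastTwo {s : List Bool} (hs : 2 ≤ s.length) :
    ∃ (r : List Bool) (p q : Bool), s = r ++ [p, q] := by
  match hr : s.reverse with
  | [] => simp [← s.length_reverse, hr] at hs
  | [q] => rw [← s.length_reverse, hr] at hs; simp at hs
  | q :: p :: t =>
    refine ⟨t.reverse, p, q, ?_⟩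
    rw [← s.reverse_reverse, hr]
    simp

lemma lemNorm : ∀ (k : ℕ) (u s m x y : List Bool), s.length ≤ k → 2 ≤ s.length →
    x = u ++ s.tail ++ m → y = u ++ s.dropLast ++ m → x ≠ y →
    ∃ u' s' m' : List Bool,
      u ++ s ++ m = u' ++ s' ++ m' ∧
      x = u' ++ s'.tail ++ m' ∧
      y = u' ++ s'.dropLast ++ m' ∧
      2 ≤ s'.length ∧
      (∃ a t, s' = a :: (!a) :: t) ∧ (∃ r b, s' = r ++ [b, !b]) := by
  intro k
  induction k with
  | zero => intro u s m x y h1 h2; omega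
  | succ k ih =>
    intro u s m x y hk hs hxe hye hne
    match s, hs with
    | a :: c :: t, _ =>
    by_cases hac : a = c
    · subst hac
      match t with
      | [] => exact absurd (hxe.trans hye.symm) hne
      | e :: t' =>
        have hres := ih (u ++ [a]) (a :: e :: t') m x y (by simp at hk ⊢; omega)
          (by simp) (by simpa using hxe)
          (by simpa using hye) hne
        obtain ⟨u', s', m', hz, rest⟩ := hres
        exact ⟨u', s', m', by simpa using hz, rest⟩
    · obtain ⟨r, p, q, hrpq⟩ := lastTwo (s := a :: c :: t) (by simp)
      by_cases hpq : p = q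
      · subst hpq
        match r, hrpq with
        | [], hrpq =>
          simp at hrpq
          exact absurd (hrpq.1.trans hrpq.2.1.symm) hac
        | r0 :: r', hrpq =>
          have hr0 : r0 = a := by
            have := congrArg (fun l => l.headI) hrpq; simpa using this.symm
          have hres := ih u ((r0 :: r') ++ [p]) (p :: m) x y
            (by have := congrArg List.length hrpq; simp at this hk ⊢; omega)
            (by simp)
            (by rw [hxe, hrpq]; simp)
            (by rw [hye, hrpq]
                rw [show (r0 :: r') ++ [p, p] = ((r0 :: r') ++ [p]) ++ [p] by simp,
                  List.dropLast_concat, List.dropLast_concat]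
                simp)
            hne
          obtain ⟨u', s', m', hz, rest⟩ := hres
          refine ⟨u', s', m', ?_, rest⟩
          rw [← hz, hrpq]; simp
      · refine ⟨u, a :: c :: t, m, rfl, hxe, hye, by simp, ⟨a, t, ?_⟩, ⟨r, p, ?_⟩⟩
        · cases a <;> cases c <;> simp_all
        · rw [hrpq]; cases p <;> cases q <;> simp_all


lemma typeB_symm {x y : List Bool} (h : TypeB y x) : TypeB x y := by
  obtain ⟨u, v, w, a, b, hset⟩ := h
  exact ⟨u, v, w, a, b, by rw [← hset, Set.pair_comm]⟩

lemma mainAux (u s m x y : List Bool) (hs2 : 2 ≤ s.length)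
    (hxe : x = u ++ s.tail ++ m) (hye : y = u ++ s.dropLast ++ m)
    (hne : x ≠ y)
    (hset : insBall 1 x ∩ insBall 1 y = {u ++ s ++ m}) : TypeB x y := by
  obtain ⟨u', s', m', hzz, hx', hy', hs2', ⟨a, t, hat⟩, ⟨r, b, hrb⟩⟩ :=
    lemNorm s.length u s m x y le_rfl hs2 hxe hye hne
  rw [hzz] at hset
  subst hat
  rcases t with _ | ⟨e, _ | ⟨f, t'⟩⟩
  · -- s' = [a, !a]; contradiction: two common supersequences
    exfalso
    have hx2 : x = u' ++ [!a] ++ m' := by simpa using hx'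
    have hy2 : y = u' ++ [a] ++ m' := by simpa using hy'
    have hmem : (u' ++ [!a, a] ++ m') ∈ insBall 1 x ∩ insBall 1 y := by
      constructor
      · refine ⟨by simp [hx2]; try omega, ?_⟩
        rw [hx2]
        simpa only [List.append_assoc] using (Sublist.refl u').append
          (((by cases a <;> decide : [!a] <+ [!a, a])).append (Sublist.refl m'))
      · refine ⟨by simp [hy2]; try omega, ?_⟩
        rw [hy2]
        simpa only [List.append_assoc] using (Sublist.refl u').append
          (((by cases a <;> decide : [a] <+ [!a, a])).append (Sublist.refl m'))
    rw [hset] at hmem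
    simp only [Set.mem_singleton_iff] at hmem
    simp at hmem
  · -- s' = [a, !a, e] with e = a
    exfalso
    have he : e = a := by
      rcases r with _ | ⟨r0, _ | ⟨r1, r''⟩⟩
      · have := congrArg List.length hrb; simp at this
      · have : a = r0 ∧ a = !b ∧ e = !b := by simpa using hrb
        cases a <;> cases b <;> simp_all
      · have := congrArg List.length hrb; simp at this; try omega
    subst he
    have hx2 : x = u' ++ [!e, e] ++ m' := by simpa using hx'
    have hy2 : y = u' ++ [e, !e] ++ m' := by
      rw [hy', show (e :: (!e) :: [e] : List Bool) = [e, !e] ++ [e] by simp,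
        List.dropLast_concat]
    have hmem : (u' ++ [!e, e, !e] ++ m') ∈ insBall 1 x ∩ insBall 1 y := by
      constructor
      · refine ⟨by simp [hx2]; try omega, ?_⟩
        rw [hx2]
        simpa only [List.append_assoc] using (Sublist.refl u').append
          (((by cases e <;> decide : [!e, e] <+ [!e, e, !e])).append (Sublist.refl m'))
      · refine ⟨by simp [hy2]; try omega, ?_⟩
        rw [hy2]
        simpa only [List.append_assoc] using (Sublist.refl u').append
          (((by cases e <;> decide : [e, !e] <+ [!e, e, !e])).append (Sublist.refl m'))
    rw [hset] at hmem
    simp only [Set.mem_singleton_iff] at hmem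
    simp at hmem
  · -- length ≥ 4 : Type B
    rcases r with _ | ⟨r0, _ | ⟨r1, r'⟩⟩
    · exfalso; have := congrArg List.length hrb; simp at this
    · exfalso; have := congrArg List.length hrb; simp at this; try omega
    · have ht : e :: f :: t' = r' ++ [b, !b] := by
        have h3 := hrb
        simp only [List.cons_append, List.cons.injEq] at h3
        exact h3.2.2
      refine ⟨u', r', m', a, b, ?_⟩
      have hx2 : x = u' ++ [!a] ++ r' ++ [b, !b] ++ m' := by
        rw [hx']; simp [ht]
      have hy2 : y = u' ++ [a, !a] ++ r' ++ [b] ++ m' := by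
        rw [hy']
        have hdl : (a :: (!a) :: e :: f :: t' : List Bool).dropLast
            = [a, !a] ++ r' ++ [b] := by
          rw [show (a :: (!a) :: e :: f :: t' : List Bool)
              = (([a, !a] ++ r' ++ [b]) ++ [!b]) by simp [ht],
            List.dropLast_concat]
        rw [hdl]; simp
      rw [hx2, hy2, Set.pair_comm]

theorem stmt0 (n : ℕ) (hn : 1 ≤ n) (x y : List Bool)
    (hx : x.length = n) (hy : y.length = n) (hne : x ≠ y)
    (h : (insBall 1 x ∩ insBall 1 y).ncard = 1) : TypeB x y := by
  rw [Set.ncard_eq_one] at h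
  obtain ⟨z, hz⟩ := h
  have hzmem : z ∈ insBall 1 x ∩ insBall 1 y := by rw [hz]; exact rfl
  obtain ⟨⟨hzl, hxz⟩, ⟨hzl', hyz⟩⟩ := hzmem
  obtain ⟨u, s, m, hzdec, hslen, hcase⟩ := lemL hxz hyz hzl hzl' hne
  rw [hzdec] at hz
  rcases hcase with ⟨e1, e2⟩ | ⟨e1, e2⟩
  · exact mainAux u s m x y hslen e1 e2 hne hz
  · refine typeB_symm (mainAux u s m y x hslen e1 e2 (Ne.symm hne) ?_)
    rw [Set.inter_comm]; exact hz
end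

section
/- Let x = u w v and y = u w̄ v be Type-A confusable binary sequences of length n, where w is the alternating block on which they differ. Then x and y are Type-B confusable if and only if w ∈ {(10)^m, (01)^m} for some m ≥ 2, or w ∈ {(10)^m 1, (01)^m 0} for some m ≥ 1. -/
open List

lemma bcompl_append (s t : List Bool) : bcompl (s ++ t) = bcompl s ++ bcompl t :=
  List.map_append

lemma wpow_succ (p : List Bool) (n : ℕ) : wpow p (n+1) = p ++ wpow p n := by
  simp [wpow, List.replicate_succ]

lemma wpow_add (p : List Bool) (m n : ℕ) : wpow p (m+n) = wpow p m ++ wpow p n := by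
  induction m with
  | zero => simp [wpow]
  | succ k ih =>
    rw [show k + 1 + n = (k + n) + 1 by omega, wpow_succ, ih, wpow_succ]
    simp [List.append_assoc]

lemma wpow_one (p : List Bool) : wpow p 1 = p := by simp [wpow]

lemma wpow_succ' (p : List Bool) (n : ℕ) : wpow p (n+1) = wpow p n ++ p := by
  rw [wpow_add, wpow_one]

lemma wpow_middle (p : List Bool) (k : ℕ) : wpow p (k+2) = p ++ (wpow p k ++ p) := by
  have h : k + 2 = 1 + k + 1 := by omega
  rw [h, wpow_add, wpow_add]
  simp [wpow]

lemma wpow_shift (c : Bool) (m : ℕ) : wpow [c, !c] m ++ [c] = [c] ++ wpow [!c, c] m := by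
  induction m with
  | zero => rfl
  | succ n ih =>
    rw [wpow_succ, List.append_assoc, ih, wpow_succ]
    simp

lemma bcompl_wpow (c : Bool) (m : ℕ) : bcompl (wpow [c, !c] m) = wpow [!c, c] m := by
  induction m with
  | zero => rfl
  | succ n ih =>
    rw [wpow_succ, bcompl_append, ih, wpow_succ]
    simp [bcompl]

lemma typeB_even (u v : List Bool) (c : Bool) (k : ℕ) :
    TypeB (u ++ wpow [c, !c] (k+2) ++ v) (u ++ bcompl (wpow [c, !c] (k+2)) ++ v) := by
  refine ⟨u, wpow [c, !c] k ++ [c], v, c, !c, ?_⟩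
  have e1 : u ++ wpow [c, !c] (k+2) ++ v
      = u ++ [c, !c] ++ (wpow [c, !c] k ++ [c]) ++ [!c] ++ v := by
    rw [wpow_middle]; simp [List.append_assoc]
  have e2 : u ++ bcompl (wpow [c, !c] (k+2)) ++ v
      = u ++ [!c] ++ (wpow [c, !c] k ++ [c]) ++ [!c, !(!c)] ++ v := by
    rw [bcompl_wpow, wpow_middle]
    rw [wpow_shift]
    simp [List.append_assoc]
  rw [e1, e2]

lemma typeB_odd (u v : List Bool) (c : Bool) (k : ℕ) :
    TypeB (u ++ (wpow [c, !c] (k+1) ++ [c]) ++ v)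
          (u ++ bcompl (wpow [c, !c] (k+1) ++ [c]) ++ v) := by
  refine ⟨u, wpow [c, !c] k, v, c, c, ?_⟩
  have e1 : u ++ (wpow [c, !c] (k+1) ++ [c]) ++ v
      = u ++ [c, !c] ++ wpow [c, !c] k ++ [c] ++ v := by
    rw [wpow_succ]; simp [List.append_assoc]
  have e2 : u ++ bcompl (wpow [c, !c] (k+1) ++ [c]) ++ v
      = u ++ [!c] ++ wpow [c, !c] k ++ [c, !c] ++ v := by
    have hsh : wpow [!c, c] (k+1) ++ [!c] = [!c] ++ wpow [c, !c] (k+1) := by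
      have := wpow_shift (!c) (k+1)
      simpa using this
    rw [bcompl_append, bcompl_wpow, show bcompl [c] = [!c] from rfl, hsh,
      wpow_succ']
    simp [List.append_assoc]
  rw [e1, e2]

lemma getD_append_len (s t : List Bool) (i : ℕ) :
    (s ++ t).getD (s.length + i) false = t.getD i false := by
  rw [List.getD_append_right _ _ _ _ (Nat.le_add_right _ _)]
  simp

lemma getD_eq_outside (u w1 w2 v : List Bool) (h : w1.length = w2.length) (i : ℕ)
    (hi : i < u.length ∨ u.length + w1.length ≤ i) :
    (u ++ w1 ++ v).getD i false = (u ++ w2 ++ v).getD i false := by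
  rw [List.append_assoc u w1 v, List.append_assoc u w2 v]
  rcases hi with hi | hi
  · rw [List.getD_append _ _ _ _ hi, List.getD_append _ _ _ _ hi]
  · rw [List.getD_append_right u _ _ _ (by omega),
      List.getD_append_right u _ _ _ (by omega),
      List.getD_append_right w1 _ _ _ (by omega),
      List.getD_append_right w2 _ _ _ (by omega), h]

lemma typeB_two_diffs (u' v' w' : List Bool) (a b : Bool) :
    ∃ p q : ℕ, p + 2 ≤ q ∧
      (u' ++ [a, !a] ++ v' ++ [b] ++ w').getD p false
        ≠ (u' ++ [!a] ++ v' ++ [b, !b] ++ w').getD p false ∧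
      (u' ++ [a, !a] ++ v' ++ [b] ++ w').getD q false
        ≠ (u' ++ [!a] ++ v' ++ [b, !b] ++ w').getD q false := by
  have A1 : (u' ++ ([a, !a] ++ (v' ++ ([b] ++ w')))).getD u'.length false = a := by
    simpa using getD_append_len u' ([a, !a] ++ (v' ++ ([b] ++ w'))) 0
  have B1 : (u' ++ ([!a] ++ (v' ++ ([b, !b] ++ w')))).getD u'.length false = !a := by
    simpa using getD_append_len u' ([!a] ++ (v' ++ ([b, !b] ++ w'))) 0
  have A2 : (u' ++ ([a, !a] ++ (v' ++ ([b] ++ w')))).getD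
      (u'.length + (2 + v'.length)) false = b := by
    rw [getD_append_len]
    rw [show (2 : ℕ) + v'.length = ([a, !a] : List Bool).length + v'.length by simp]
    rw [getD_append_len]
    simpa using getD_append_len v' ([b] ++ w') 0
  have B2 : (u' ++ ([!a] ++ (v' ++ ([b, !b] ++ w')))).getD
      (u'.length + (2 + v'.length)) false = !b := by
    rw [getD_append_len]
    rw [show (2 : ℕ) + v'.length = ([!a] : List Bool).length + (v'.length + 1) by
      simp; omega]
    rw [getD_append_len, getD_append_len]
    simp
  have hE1 : u' ++ [a, !a] ++ v' ++ [b] ++ w' = u' ++ ([a, !a] ++ (v' ++ ([b] ++ w'))) := by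
    simp [List.append_assoc]
  have hE2 : u' ++ [!a] ++ v' ++ [b, !b] ++ w'
      = u' ++ ([!a] ++ (v' ++ ([b, !b] ++ w'))) := by
    simp [List.append_assoc]
  refine ⟨u'.length, u'.length + (2 + v'.length), by omega, ?_, ?_⟩
  · rw [hE1, hE2, A1, B1]; cases a <;> simp
  · rw [hE1, hE2, A2, B2]; cases b <;> simp

theorem stmt1 (u v w x y : List Bool) (hw : IsAlt w)
    (hx : x = u ++ w ++ v) (hy : y = u ++ bcompl w ++ v) :
    TypeB x y ↔
      ((∃ m, 2 ≤ m ∧ (w = wpow [true, false] m ∨ w = wpow [false, true] m)) ∨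
       (∃ m, 1 ≤ m ∧ (w = wpow [true, false] m ++ [true] ∨
                      w = wpow [false, true] m ++ [false]))) := by
  constructor
  · rintro ⟨u', v', w', a, b, hset⟩
    obtain ⟨p, q, hpq, hdp, hdq⟩ := typeB_two_diffs u' v' w' a b
    have hXmem : (u' ++ [a, !a] ++ v' ++ [b] ++ w') ∈ ({x, y} : Set (List Bool)) := by
      rw [hset]; exact Set.mem_insert _ _
    have hYmem : (u' ++ [!a] ++ v' ++ [b, !b] ++ w') ∈ ({x, y} : Set (List Bool)) := by
      rw [hset]; exact Set.mem_insert_of_mem _ rfl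
    simp only [Set.mem_insert_iff, Set.mem_singleton_iff] at hXmem hYmem
    have key : x.getD p false ≠ y.getD p false ∧ x.getD q false ≠ y.getD q false := by
      rcases hXmem with hX | hX <;> rcases hYmem with hY | hY
      · exact absurd (hX.trans hY.symm) (fun h => hdp (by rw [h]))
      · exact ⟨by rw [← hX, ← hY]; exact hdp, by rw [← hX, ← hY]; exact hdq⟩
      · exact ⟨by rw [← hX, ← hY]; exact hdp.symm, by rw [← hX, ← hY]; exact hdq.symm⟩
      · exact absurd (hX.trans hY.symm) (fun h => hdp (by rw [h]))
    have hwlen : ∀ r : ℕ, x.getD r false ≠ y.getD r false →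
        u.length ≤ r ∧ r < u.length + w.length := by
      intro r hr
      constructor
      · by_contra h1
        push_neg at h1
        exact hr (by
          rw [hx, hy]
          exact getD_eq_outside u w (bcompl w) v (by simp [bcompl]) r (Or.inl h1))
      · by_contra h2
        push_neg at h2
        exact hr (by
          rw [hx, hy]
          exact getD_eq_outside u w (bcompl w) v (by simp [bcompl]) r (Or.inr h2))
    obtain ⟨hp1, hp2⟩ := hwlen p key.1
    obtain ⟨hq1, hq2⟩ := hwlen q key.2
    rcases hw with ⟨c, ⟨i, hi, hwe⟩ | ⟨j, hwe⟩⟩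
    · rcases Nat.lt_or_ge i 2 with h2 | h2
      · exfalso
        have hi1 : i = 1 := by omega
        subst hi1
        have hlw : w.length = 2 := by rw [hwe, wpow_one]; rfl
        omega
      · left
        refine ⟨i, h2, ?_⟩
        cases c
        · right; simpa using hwe
        · left; simpa using hwe
    · rcases Nat.eq_zero_or_pos j with h0 | h1
      · exfalso
        subst h0
        have hlw : w.length = 1 := by rw [hwe]; rfl
        omega
      · right
        refine ⟨j, h1, ?_⟩
        cases c
        · right; simpa using hwe
        · left; simpa using hwe
  · rintro (⟨m, hm, hwe | hwe⟩ | ⟨m, hm, hwe | hwe⟩) <;> subst hwe <;> subst hx <;> subst hy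
    · obtain ⟨k, rfl⟩ : ∃ k, m = k + 2 := ⟨m - 2, by omega⟩
      simpa using typeB_even u v true k
    · obtain ⟨k, rfl⟩ : ∃ k, m = k + 2 := ⟨m - 2, by omega⟩
      simpa using typeB_even u v false k
    · obtain ⟨k, rfl⟩ : ∃ k, m = k + 1 := ⟨m - 1, by omega⟩
      have := typeB_odd u v true k
      simp only [List.append_assoc] at this ⊢
      simpa using this
    · obtain ⟨k, rfl⟩ : ∃ k, m = k + 1 := ⟨m - 1, by omega⟩
      have := typeB_odd u v false k
      simp only [List.append_assoc] at this ⊢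
      simpa using this
end

section
/- Let n ≥ 3 and let x, y ∈ {0,1}^n. If |I_1(x) ∩ I_1(y)| = 1, then n + 3 ≤ |I_2(x) ∩ I_2(y)| ≤ n + 5. -/
open List

private lemma sub_tail {s t : List Bool} {e : Bool} (h : s <+ e :: t) : s.tail <+ t := by
  cases s with
  | nil => exact nil_sublist t
  | cons a s' =>
    cases h with
    | cons _ h' => exact (sublist_cons_self a s').trans h'
    | cons_cons _ h' => exact h'

private lemma sub_ne_head {c e : Bool} {x w : List Bool} (h : (c :: x) <+ (e :: w))
    (hne : c ≠ e) : (c :: x) <+ w := by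
  cases h with
  | cons _ h' => exact h'
  | cons_cons _ h' => exact absurd rfl hne

private lemma lemA_s4 : ∀ (x y : List Bool), x.length = y.length → x ≠ y →
    ∃ w₁ w₂, ∀ w, w.length = x.length + 1 → x <+ w → y <+ w → w = w₁ ∨ w = w₂ := by
  intro x
  induction x with
  | nil =>
    intro y hl hne
    cases y with
    | nil => exact absurd rfl hne
    | cons d y' => simp at hl
  | cons c x' ih =>
    intro y hl hne
    cases y with
    | nil => simp at hl
    | cons d y' =>
      by_cases hcd : c = d
      · subst hcd
        have hne' : x' ≠ y' := fun hh => hne (by rw [hh])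
        obtain ⟨pa, qa, hA⟩ := ih y' (by simp at hl ⊢; omega) hne'
        refine ⟨c :: pa, c :: qa, ?_⟩
        intro w hwl hxw hyw
        cases w with
        | nil => exact absurd hwl (by simp)
        | cons e w' =>
          by_cases hec : e = c
          · subst hec
            have h1 : x' <+ w' := sub_tail hxw
            have h2 : y' <+ w' := sub_tail hyw
            rcases hA w' (by simp at hwl ⊢; omega) h1 h2 with hh | hh <;> simp [hh]
          · have h1 : (c :: x') <+ w' := sub_ne_head hxw (fun hh => hec hh.symm)
            have h2 : (c :: y') <+ w' := sub_ne_head hyw (fun hh => hec hh.symm)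
            have e1 : (c :: x') = w' := h1.eq_of_length (by simp at hwl ⊢; omega)
            have e2 : (c :: y') = w' := h2.eq_of_length (by simp at hwl hl ⊢; omega)
            exact absurd (e1.trans e2.symm) hne
      · refine ⟨c :: (d :: y'), d :: (c :: x'), ?_⟩
        intro w hwl hxw hyw
        cases w with
        | nil => exact absurd hwl (by simp)
        | cons e w' =>
          by_cases hec : e = c
          · subst hec
            have h2 : (d :: y') <+ w' := sub_ne_head hyw (fun hh => hcd hh.symm)
            have e2 : (d :: y') = w' := h2.eq_of_length (by simp at hwl hl ⊢; omega)
            exact Or.inl (by rw [e2])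
          · by_cases hed : e = d
            · subst hed
              have h1 : (c :: x') <+ w' := sub_ne_head hxw (fun hh => hec hh.symm)
              have e1 : (c :: x') = w' := h1.eq_of_length (by simp at hwl ⊢; omega)
              exact Or.inr (by rw [e1])
            · have h1 : (c :: x') <+ w' := sub_ne_head hxw (fun hh => hec hh.symm)
              have h2 : (d :: y') <+ w' := sub_ne_head hyw (fun hh => hed hh.symm)
              have e1 : (c :: x') = w' := h1.eq_of_length (by simp at hwl ⊢; omega)
              have e2 : (d :: y') = w' := h2.eq_of_length (by simp at hwl hl ⊢; omega)
              exact absurd (e1.trans e2.symm) hne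

private lemma lemH : ∀ (p q : List Bool), p.length = q.length + 1 → ¬ q <+ p →
    ∃ w₁ w₂ w₃, ∀ w, w.length = p.length + 1 → p <+ w → q <+ w →
      w = w₁ ∨ w = w₂ ∨ w = w₃ := by
  intro p
  induction p with
  | nil => intro q hl _; simp at hl
  | cons e p' ih =>
    intro q hl hq
    cases q with
    | nil => exact absurd (nil_sublist _) hq
    | cons g q' =>
      by_cases hge : g = e
      · subst hge
        have hne' : ¬ q' <+ p' := fun hh => hq (cons_sublist_cons.mpr hh)
        obtain ⟨t₁, t₂, t₃, hH⟩ := ih q' (by simp at hl ⊢; omega) hne'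
        refine ⟨g :: t₁, g :: t₂, g :: t₃, ?_⟩
        intro w hwl hpw hqw
        cases w with
        | nil => exact absurd hwl (by simp)
        | cons ew w' =>
          by_cases hee : ew = g
          · subst hee
            have h1 : p' <+ w' := sub_tail hpw
            have h2 : q' <+ w' := sub_tail hqw
            rcases hH w' (by simp at hwl ⊢; omega) h1 h2 with hh | hh | hh <;> simp [hh]
          · have h1 : (g :: p') <+ w' := sub_ne_head hpw (fun hh => hee hh.symm)
            have e1 : (g :: p') = w' := h1.eq_of_length (by simp at hwl ⊢; omega)
            have h2 : (g :: q') <+ w' := sub_ne_head hqw (fun hh => hee hh.symm)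
            rw [← e1] at h2
            exact absurd h2 hq
      · obtain ⟨pa, qa, hA⟩ := lemA_s4 p' (g :: q') (by simp at hl ⊢; omega)
          (fun hh => hq (by rw [← hh]; exact sublist_cons_self e p'))
        refine ⟨e :: pa, e :: qa, g :: (e :: p'), ?_⟩
        intro w hwl hpw hqw
        cases w with
        | nil => exact absurd hwl (by simp)
        | cons ew w' =>
          by_cases hee : ew = e
          · subst hee
            have h1 : p' <+ w' := sub_tail hpw
            have h2 : (g :: q') <+ w' := sub_ne_head hqw hge
            rcases hA w' (by simp at hwl ⊢; omega) h1 h2 with hh | hh <;> simp [hh]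
          · have h1 : (e :: p') <+ w' := sub_ne_head hpw (fun hh => hee hh.symm)
            have e1 : (e :: p') = w' := h1.eq_of_length (by simp at hwl ⊢; omega)
            by_cases heg : ew = g
            · subst heg
              right; right; rw [e1]
            · have h2 : (g :: q') <+ w' := sub_ne_head hqw (fun hh => heg hh.symm)
              rw [← e1] at h2
              exact absurd h2 hq

private lemma lemG : ∀ (u v : List Bool) (a : Bool),
    u.length = v.length + 1 → ¬ v <+ u → u.tail <+ a :: v →
    ∃ w₁ w₂, ∀ w, w.length = u.length + 1 → u <+ w → v <+ w → ¬ (a :: v) <+ w →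
      w = w₁ ∨ w = w₂ := by
  intro u
  induction u with
  | nil => intro v a hl _ _; simp at hl
  | cons c u' ih =>
    intro v a hl hvu hu'
    simp only [List.tail_cons] at hu'
    cases v with
    | nil => exact absurd (nil_sublist _) hvu
    | cons d v' =>
      by_cases hdc : d = c
      · subst hdc
        -- v = d :: v', u = d :: u'
        by_cases hac : a = d
        · subst hac
          -- recurse
          have hne : ¬ v' <+ u' := fun hh => hvu (cons_sublist_cons.mpr hh)
          have ht : u'.tail <+ a :: v' := sub_tail hu'
          obtain ⟨ww₁, ww₂, hW⟩ := ih v' a (by simp at hl ⊢; omega) hne ht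
          refine ⟨a :: ww₁, a :: ww₂, ?_⟩
          intro w hwl huw hvw hfw
          cases w with
          | nil => exact absurd hwl (by simp)
          | cons e w' =>
            by_cases hea : e = a
            · subst hea
              have h1 : u' <+ w' := sub_tail huw
              have h2 : v' <+ w' := sub_tail hvw
              have h3 : ¬ (e :: v') <+ w' := fun hh => hfw (Sublist.cons₂ e hh)
              rcases hW w' (by simp at hwl ⊢; omega) h1 h2 h3 with hh | hh <;> simp [hh]
            · have h1 : (a :: u') <+ w' := sub_ne_head huw (fun hh => hea hh.symm)
              have h2 : (a :: v') <+ w' := sub_ne_head hvw (fun hh => hea hh.symm)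
              have e1 : (a :: u') = w' := h1.eq_of_length (by simp at hwl ⊢; omega)
              rw [← e1] at h2
              exact absurd h2 hvu
        · -- a ≠ d, use lemH on (u', v')
          have hne : ¬ v' <+ u' := fun hh => hvu (cons_sublist_cons.mpr hh)
          obtain ⟨t₁, t₂, t₃, hH⟩ := lemH u' v' (by simp at hl ⊢; omega) hne
          have hvf : v' <+ a :: d :: v' :=
            ((sublist_cons_self d v').trans (sublist_cons_self a _))
          have hf3 : (a :: d :: v') = t₁ ∨ (a :: d :: v') = t₂ ∨ (a :: d :: v') = t₃ :=
            hH (a :: d :: v') (by simp at hl ⊢; omega) hu' hvf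
          refine ⟨if (a :: d :: v') = t₁ then d :: t₂ else d :: t₁,
                  if (a :: d :: v') = t₁ then d :: t₃ else
                    (if (a :: d :: v') = t₂ then d :: t₃ else d :: t₂), ?_⟩
          intro w hwl huw hvw hfw
          cases w with
          | nil => exact absurd hwl (by simp)
          | cons e w' =>
            by_cases hed : e = d
            · subst hed
              have h1 : u' <+ w' := sub_tail huw
              have h2 : v' <+ w' := sub_tail hvw
              have hw3 := hH w' (by simp at hwl ⊢; omega) h1 h2
              have hwf : w' ≠ (a :: e :: v') := by
                intro hh
                exact hfw (by rw [← hh]; exact Sublist.cons e (Sublist.refl w'))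
              by_cases h1' : (a :: e :: v') = t₁
              · simp only [if_pos h1']
                rcases hw3 with hh | hh | hh
                · exact absurd (hh.trans h1'.symm) hwf
                · exact Or.inl (by rw [hh])
                · exact Or.inr (by rw [hh])
              · simp only [if_neg h1']
                by_cases h2' : (a :: e :: v') = t₂
                · simp only [if_pos h2']
                  rcases hw3 with hh | hh | hh
                  · exact Or.inl (by rw [hh])
                  · exact absurd (hh.trans h2'.symm) hwf
                  · exact Or.inr (by rw [hh])
                · simp only [if_neg h2']
                  have h3' : (a :: e :: v') = t₃ := by tauto
                  rcases hw3 with hh | hh | hh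
                  · exact Or.inl (by rw [hh])
                  · exact Or.inr (by rw [hh])
                  · exact absurd (hh.trans h3'.symm) hwf
            · have h1 : (d :: u') <+ w' := sub_ne_head huw (fun hh => hed hh.symm)
              have h2 : (d :: v') <+ w' := sub_ne_head hvw (fun hh => hed hh.symm)
              have e1 : (d :: u') = w' := h1.eq_of_length (by simp at hwl ⊢; omega)
              rw [← e1] at h2
              exact absurd h2 hvu
      · -- d ≠ c
        have hvu' : (d :: v') ≠ u' := by
          intro hh
          exact hvu (by rw [hh]; exact sublist_cons_self c u')
        obtain ⟨pa, qa, hA⟩ := lemA_s4 (d :: v') u' (by simp at hl ⊢; omega) hvu'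
        refine ⟨if (a :: d :: v') = pa then c :: qa else c :: pa, d :: (c :: u'), ?_⟩
        intro w hwl huw hvw hfw
        cases w with
        | nil => exact absurd hwl (by simp)
        | cons e w' =>
          by_cases hec : e = c
          · subst hec
            have h1 : (d :: v') <+ w' := sub_ne_head hvw hdc
            have h2 : u' <+ w' := sub_tail huw
            by_cases hac : a = e
            · exact absurd (by rw [hac]; exact Sublist.cons₂ e h1) hfw
            · have hwA := hA w' (by simp at hwl hl ⊢; omega) h1 h2
              have hfi : (a :: d :: v') = pa ∨ (a :: d :: v') = qa :=
                hA (a :: d :: v') (by simp) (sublist_cons_self a _) hu'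
              have hwf : w' ≠ (a :: d :: v') := by
                intro hh
                exact hfw (by rw [← hh]; exact Sublist.cons e (Sublist.refl w'))
              by_cases h1' : (a :: d :: v') = pa
              · rw [if_pos h1']
                rcases hwA with hh | hh
                · exact absurd (hh.trans h1'.symm) hwf
                · exact Or.inl (by rw [hh])
              · rw [if_neg h1']
                have h2' : (a :: d :: v') = qa := by tauto
                rcases hwA with hh | hh
                · exact Or.inl (by rw [hh])
                · exact absurd (hh.trans h2'.symm) hwf
          · have h1 : (c :: u') <+ w' := sub_ne_head huw (fun hh => hec hh.symm)
            have e1 : (c :: u') = w' := h1.eq_of_length (by simp at hwl ⊢; omega)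
            by_cases hed : e = d
            · subst hed
              exact Or.inr (by rw [e1])
            · have h2 : (d :: v') <+ w' := sub_ne_head hvw (fun hh => hed hh.symm)
              rw [← e1] at h2
              exact absurd h2 hvu

private lemma bool_resolve2 : ∀ {e a b : Bool}, a ≠ b → e ≠ b → e = a := by decide

private lemma lemEbase (a b : Bool) (x' y' : List Bool)
    (hl : (a :: x').length = (b :: y').length) (hab : a ≠ b) (hx'y : x' <+ (b :: y')) :
    ∃ e₁ e₂, ∀ z', z'.length = (a :: x').length + 2 → (a :: x') <+ z' → (b :: y') <+ z' →
      (∀ w, w.length = (a :: x').length + 1 → (a :: x') <+ w → (b :: y') <+ w → ¬ w <+ z') →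
      z' = e₁ ∨ z' = e₂ := by
  by_cases hyx : y' <+ (a :: x')
  · refine ⟨[], [], ?_⟩
    intro z' hzl hxz hyz hmin
    exfalso
    cases z' with
    | nil => exact absurd hzl (by simp)
    | cons e z'' =>
      by_cases heb : e = b
      · subst heb
        have hxz'' : (a :: x') <+ z'' := sub_ne_head hxz hab
        exact hmin (e :: (a :: x')) (by simp)
          (sublist_cons_self e _) (cons_sublist_cons.mpr hyx)
          (Sublist.cons₂ e hxz'')
      · have hea : e = a := bool_resolve2 hab heb
        subst hea
        have hyz'' : (b :: y') <+ z'' := sub_ne_head hyz (fun hh => heb hh.symm)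
        exact hmin (e :: (b :: y')) (by simp at hl ⊢; omega)
          (cons_sublist_cons.mpr hx'y) (sublist_cons_self e _)
          (Sublist.cons₂ e hyz'')
  · obtain ⟨w₁, w₂, hG⟩ := lemG (a :: x') y' b (by simp at hl ⊢; omega) hyx
      (by simpa using hx'y)
    refine ⟨b :: w₁, b :: w₂, ?_⟩
    intro z' hzl hxz hyz hmin
    cases z' with
    | nil => exact absurd hzl (by simp)
    | cons e z'' =>
      by_cases heb : e = b
      · subst heb
        have hxz'' : (a :: x') <+ z'' := sub_ne_head hxz hab
        have hy'z'' : y' <+ z'' := by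
          have := sub_tail hyz
          simpa using this
        have hnyz : ¬ (e :: y') <+ z'' := by
          intro hh
          exact hmin z'' (by simp at hzl ⊢; omega) hxz'' hh (sublist_cons_self e z'')
        rcases hG z'' (by simp at hzl ⊢; omega) hxz'' hy'z'' hnyz with hh | hh <;>
          simp [hh]
      · have hea : e = a := bool_resolve2 hab heb
        subst hea
        exfalso
        have hyz'' : (b :: y') <+ z'' := sub_ne_head hyz (fun hh => heb hh.symm)
        exact hmin (e :: (b :: y')) (by simp at hl ⊢; omega)
          (cons_sublist_cons.mpr hx'y) (sublist_cons_self e _)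
          (Sublist.cons₂ e hyz'')

private lemma lemE : ∀ (x y : List Bool), x.length = y.length → x ≠ y →
    (∃ z₀, z₀.length = x.length + 1 ∧ x <+ z₀ ∧ y <+ z₀) →
    ∃ e₁ e₂, ∀ z', z'.length = x.length + 2 → x <+ z' → y <+ z' →
      (∀ w, w.length = x.length + 1 → x <+ w → y <+ w → ¬ w <+ z') →
      z' = e₁ ∨ z' = e₂ := by
  intro x
  induction x with
  | nil =>
    intro y hl hne _
    cases y with
    | nil => exact absurd rfl hne
    | cons d y' => simp at hl
  | cons c x' ih =>
    intro y hl hne hz₀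
    cases y with
    | nil => simp at hl
    | cons d y' =>
      obtain ⟨z₀, hz₀l, hxz₀, hyz₀⟩ := hz₀
      cases z₀ with
      | nil => exact absurd hz₀l (by simp)
      | cons e t =>
        by_cases hcd : c = d
        · subst hcd
          -- strip common head
          have hne' : x' ≠ y' := fun hh => hne (by rw [hh])
          have hec : e = c := by
            by_contra hec
            have h1 : (c :: x') <+ t := sub_ne_head hxz₀ (fun hh => hec hh.symm)
            have h2 : (c :: y') <+ t := sub_ne_head hyz₀ (fun hh => hec hh.symm)
            have e1 : (c :: x') = t := h1.eq_of_length (by simp at hz₀l ⊢; omega)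
            have e2 : (c :: y') = t := h2.eq_of_length (by simp at hz₀l hl ⊢; omega)
            exact hne (e1.trans e2.symm)
          subst hec
          obtain ⟨e₁, e₂, hE⟩ := ih y' (by simp at hl ⊢; omega) hne'
            ⟨t, by simp at hz₀l ⊢; omega, sub_tail hxz₀, sub_tail hyz₀⟩
          refine ⟨e :: e₁, e :: e₂, ?_⟩
          intro z' hzl hxz hyz hmin
          cases z' with
          | nil => exact absurd hzl (by simp)
          | cons g z'' =>
            by_cases hge : g = e
            · subst hge
              have h1 : x' <+ z'' := sub_tail hxz
              have h2 : y' <+ z'' := sub_tail hyz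
              have hmin' : ∀ w, w.length = x'.length + 1 → x' <+ w → y' <+ w → ¬ w <+ z'' := by
                intro w hwl hx'w hy'w hwz
                exact hmin (g :: w) (by simp at hwl ⊢; omega)
                  (cons_sublist_cons.mpr hx'w) (cons_sublist_cons.mpr hy'w)
                  (Sublist.cons₂ g hwz)
              rcases hE z'' (by simp at hzl ⊢; omega) h1 h2 hmin' with hh | hh <;> simp [hh]
            · exfalso
              have h1 : (e :: x') <+ z'' := sub_ne_head hxz (fun hh => hge hh.symm)
              have h2 : (e :: y') <+ z'' := sub_ne_head hyz (fun hh => hge hh.symm)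
              exact hmin z'' (by simp at hzl ⊢; omega) h1 h2 (sublist_cons_self g z'')
        · -- heads differ; base case
          by_cases hec : e = c
          · -- z₀ = c :: t, y <+ t, so t = y, x' <+ y
            subst hec
            have h2 : (d :: y') <+ t := sub_ne_head hyz₀ (fun hh => hcd hh.symm)
            have e2 : (d :: y') = t := h2.eq_of_length (by simp at hz₀l hl ⊢; omega)
            have hx'y : x' <+ (d :: y') := by
              rw [e2]
              have := sub_tail hxz₀
              simpa using this
            exact lemEbase e d x' y' hl hcd hx'y
          · -- e = d, z₀ = d :: t, x <+ t, so t = x, y' <+ x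
            have hed : e = d := bool_resolve2 (fun hh : d = c => hcd hh.symm) hec
            subst hed
            have h1 : (c :: x') <+ t := sub_ne_head hxz₀ (fun hh => hec hh.symm)
            have e1 : (c :: x') = t := h1.eq_of_length (by simp at hz₀l ⊢; omega)
            have hy'x : y' <+ (c :: x') := by
              rw [e1]
              have := sub_tail hyz₀
              simpa using this
            obtain ⟨e₁, e₂, hB⟩ := lemEbase e c y' x' hl.symm (fun hh => hcd hh.symm) hy'x
            refine ⟨e₁, e₂, ?_⟩
            intro z' hzl hxz hyz hmin
            exact hB z' (by simp at hl hzl ⊢; omega) hyz hxz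
              (fun w hwl hyw hxw => hmin w (by simp at hl hwl ⊢; omega) hxw hyw)

private lemma lemL_s4 : ∀ u : List Bool, ∃ F : Finset (List Bool),
    F.card = u.length + 2 ∧ ∀ w ∈ F, w.length = u.length + 1 ∧ u <+ w := by
  intro u
  induction u with
  | nil =>
    refine ⟨{[false], [true]}, by decide, ?_⟩
    intro w hw
    fin_cases hw <;> exact ⟨rfl, nil_sublist _⟩
  | cons c u' ih =>
    obtain ⟨F', hcard, hmem⟩ := ih
    refine ⟨F'.image (c :: ·) ∪ {(!c) :: (c :: u')}, ?_, ?_⟩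
    · have hinj : Function.Injective (c :: · : List Bool → List Bool) :=
        fun a b hh => by simpa using hh
      have hdisj : Disjoint (F'.image (c :: ·)) ({(!c) :: (c :: u')} : Finset (List Bool)) := by
        rw [Finset.disjoint_left]
        intro a ha hb
        simp only [Finset.mem_image] at ha
        obtain ⟨w', _, rfl⟩ := ha
        simp only [Finset.mem_singleton] at hb
        have : c = !c := by injection hb
        simp at this
      rw [Finset.card_union_of_disjoint hdisj, Finset.card_image_of_injective _ hinj,
        Finset.card_singleton, hcard]
      simp
    · intro w hw
      rcases Finset.mem_union.mp hw with hw | hw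
      · simp only [Finset.mem_image] at hw
        obtain ⟨w', hw', rfl⟩ := hw
        obtain ⟨hlen, hsub⟩ := hmem w' hw'
        exact ⟨by simp [hlen], cons_sublist_cons.mpr hsub⟩
      · simp only [Finset.mem_singleton] at hw
        subst hw
        exact ⟨by simp, Sublist.cons (!c) (Sublist.refl _)⟩

private lemma lemU : ∀ u : List Bool, ∃ F : Finset (List Bool),
    F.card ≤ u.length + 2 ∧ ∀ w, w.length = u.length + 1 → u <+ w → w ∈ F := by
  intro u
  induction u with
  | nil =>
    refine ⟨{[false], [true]}, by decide, ?_⟩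
    intro w hwl _
    cases w with
    | nil => simp at hwl
    | cons e w' =>
      cases w' with
      | nil => cases e <;> simp
      | cons f w'' => simp at hwl
  | cons c u' ih =>
    obtain ⟨F', hcard, hmem⟩ := ih
    refine ⟨F'.image (c :: ·) ∪ {(!c) :: (c :: u')}, ?_, ?_⟩
    · calc (F'.image (c :: ·) ∪ {(!c) :: (c :: u')}).card
          ≤ (F'.image (c :: ·)).card + 1 := by
            simpa using Finset.card_union_le _ _
      _ ≤ F'.card + 1 := by
            have := Finset.card_image_le (f := (c :: ·)) (s := F')
            omega
      _ ≤ (c :: u').length + 2 := by simp at hcard ⊢; omega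
    · intro w hwl huw
      cases w with
      | nil => exact absurd hwl (by simp)
      | cons e w' =>
        by_cases hec : e = c
        · subst hec
          have h1 : u' <+ w' := sub_tail huw
          have hw' : w' ∈ F' := hmem w' (by simp at hwl ⊢; omega) h1
          exact Finset.mem_union_left _ (Finset.mem_image_of_mem _ hw')
        · have h1 : (c :: u') <+ w' := sub_ne_head huw (fun hh => hec hh.symm)
          have e1 : (c :: u') = w' := h1.eq_of_length (by simp at hwl ⊢; omega)
          have he : e = !c := by
            cases e <;> cases c <;> simp_all
          subst he
          rw [← e1]
          exact Finset.mem_union_right _ (Finset.mem_singleton_self _)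

theorem stmt4 (n : ℕ) (hn : 3 ≤ n) (x y : List Bool)
    (hx : x.length = n) (hy : y.length = n)
    (h : (insBall 1 x ∩ insBall 1 y).ncard = 1) :
    n + 3 ≤ (insBall 2 x ∩ insBall 2 y).ncard ∧
    (insBall 2 x ∩ insBall 2 y).ncard ≤ n + 5 := by
  obtain ⟨z, hz⟩ := Set.ncard_eq_one.mp h
  have hzmem : z ∈ insBall 1 x ∩ insBall 1 y := by rw [hz]; exact rfl
  simp only [insBall, Set.mem_inter_iff, Set.mem_setOf_eq] at hzmem
  obtain ⟨⟨hzl, hxz⟩, ⟨hzl', hyz⟩⟩ := hzmem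
  have hxy : x ≠ y := by
    intro hh
    have m1 : (x ++ [false]) ∈ insBall 1 x ∩ insBall 1 y := by
      refine ⟨⟨by simp, sublist_append_left x [false]⟩, ?_⟩
      rw [← hh]
      exact ⟨by simp, sublist_append_left x [false]⟩
    have m2 : (x ++ [true]) ∈ insBall 1 x ∩ insBall 1 y := by
      refine ⟨⟨by simp, sublist_append_left x [true]⟩, ?_⟩
      rw [← hh]
      exact ⟨by simp, sublist_append_left x [true]⟩
    rw [hz, Set.mem_singleton_iff] at m1 m2
    have := m1.trans m2.symm
    simp at this
  have huniq : ∀ w, w.length = x.length + 1 → x <+ w → y <+ w → w = z := by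
    intro w hwl hxw hyw
    have hmem : w ∈ insBall 1 x ∩ insBall 1 y :=
      ⟨⟨hwl, hxw⟩, ⟨by rw [hwl, hx, hy], hyw⟩⟩
    rw [hz, Set.mem_singleton_iff] at hmem
    exact hmem
  have hSfin : (insBall 2 x ∩ insBall 2 y).Finite := by
    apply (List.finite_length_eq Bool (n + 2)).subset
    intro l hl
    obtain ⟨⟨h1, _⟩, _⟩ := hl
    simp only [Set.mem_setOf_eq]
    rw [h1, hx]
  constructor
  · obtain ⟨F, hFcard, hFmem⟩ := lemL_s4 z
    have hsub : (↑F : Set (List Bool)) ⊆ insBall 2 x ∩ insBall 2 y := by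
      intro w hw
      obtain ⟨hwlen, hzw⟩ := hFmem w hw
      refine ⟨⟨by rw [hwlen, hzl], hxz.trans hzw⟩,
              ⟨by rw [hwlen, hzl, hx, hy], hyz.trans hzw⟩⟩
    calc n + 3 = F.card := by rw [hFcard, hzl, hx]
    _ = (↑F : Set (List Bool)).ncard := (Set.ncard_coe_finset F).symm
    _ ≤ (insBall 2 x ∩ insBall 2 y).ncard := Set.ncard_le_ncard hsub hSfin
  · obtain ⟨F, hFcard, hFmem⟩ := lemU z
    obtain ⟨e₁, e₂, hE⟩ := lemE x y (by rw [hx, hy]) hxy ⟨z, hzl, hxz, hyz⟩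
    have hsub : insBall 2 x ∩ insBall 2 y ⊆ ↑(F ∪ {e₁, e₂}) := by
      intro z' hz'
      obtain ⟨⟨h1, hxz'⟩, ⟨h2, hyz'⟩⟩ := hz'
      by_cases hzz : z <+ z'
      · have : z' ∈ F := hFmem z' (by rw [h1, hzl]) hzz
        simp [this]
      · have hmin : ∀ w, w.length = x.length + 1 → x <+ w → y <+ w → ¬ w <+ z' := by
          intro w hwl hxw hyw hwz
          exact hzz ((huniq w hwl hxw hyw) ▸ hwz)
        rcases hE z' h1 hxz' hyz' hmin with hh | hh <;> simp [hh]
    calc (insBall 2 x ∩ insBall 2 y).ncard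
        ≤ (↑(F ∪ {e₁, e₂}) : Set (List Bool)).ncard :=
          Set.ncard_le_ncard hsub (F ∪ {e₁, e₂}).finite_toSet
    _ = (F ∪ {e₁, e₂}).card := Set.ncard_coe_finset _
    _ ≤ F.card + 2 := by
        have h1 := Finset.card_union_le F ({e₁, e₂} : Finset (List Bool))
        have h2 : ({e₁, e₂} : Finset (List Bool)).card ≤ 2 := by
          have := Finset.card_insert_le e₁ ({e₂} : Finset (List Bool))
          simp at this ⊢
          omega
        omega
    _ ≤ n + 5 := by
        have : z.length + 2 = n + 3 := by rw [hzl, hx]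
        omega
end

section
/- Let n ≥ 3, a, b ∈ {0,1}, v ∈ {0,1}^{n−3}, and set x = a ā v b and y = ā v b b̄ (so x, y ∈ {0,1}^n). Suppose |I_1(x) ∩ I_1(y)| = 1. Then: (i) |I_2(x) ∩ I_2(y)| = n + 3 if and only if a ā v and v b b̄ are neither Type-A confusable nor Type-B confusable; (ii) |I_2(x) ∩ I_2(y)| = n + 4 if and only if a ā v and v b b̄ are Type-B confusable but not Type-A confusable; (iii) |I_2(x) ∩ I_2(y)| = n + 5 if and only if a ā v and v b b̄ are Type-A confusable. -/
open List

namespace Stmt5Aux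

/-- L1: head mismatch strip. -/
lemma cons_sublist_of_ne {c h : Bool} {s u : List Bool} (hs : c :: s <+ h :: u) (hne : c ≠ h) :
    c :: s <+ u := by
  cases hs with
  | cons _ h' => exact h'
  | cons_cons => exact absurd rfl hne

/-- L2: last mismatch strip. -/
lemma snoc_sublist_of_ne {c e : Bool} {s u : List Bool} (h : s ++ [c] <+ u ++ [e]) (hne : c ≠ e) :
    s ++ [c] <+ u := by
  have h1 : c :: s.reverse <+ e :: u.reverse := by
    have := List.reverse_sublist.mpr h
    simpa using this
  have h2 := cons_sublist_of_ne h1 hne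
  have h3 : (s ++ [c]).reverse <+ u.reverse := by simpa using h2
  exact List.reverse_sublist.mp h3

/-- one-insertion decomposition -/
lemma exists_insert : ∀ {p z : List Bool}, p <+ z → z.length = p.length + 1 →
    ∃ (U V : List Bool) (C : Bool), p = U ++ V ∧ z = U ++ C :: V := by
  intro p z h
  induction h with
  | slnil => intro hl; simp at hl
  | @cons l₁ l₂ a h ih =>
      intro hl
      simp only [List.length_cons] at hl
      exact ⟨[], l₂, a, h.eq_of_length (by omega), by simp⟩
  | @cons_cons l₁ l₂ a h ih =>
      intro hl
      simp only [List.length_cons] at hl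
      obtain ⟨U, V, C, h1, h2⟩ := ih (by omega)
      exact ⟨a :: U, V, C, by simp [h1], by simp [h2]⟩

lemma finite_len : ∀ m : ℕ, {z : List Bool | z.length = m}.Finite
  | 0 => by
      have : {z : List Bool | z.length = 0} = {([] : List Bool)} := by
        ext z; simp [List.length_eq_zero_iff]
      rw [this]; exact Set.finite_singleton _
  | (m+1) => by
      have : {z : List Bool | z.length = m + 1} =
          (fun p : Bool × List Bool => p.1 :: p.2) '' (Set.univ ×ˢ {z | z.length = m}) := by
        ext z
        constructor
        · intro hz
          match z with
          | [] => simp at hz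
          | c :: zr => exact ⟨(c, zr), ⟨trivial, by simpa using hz⟩, rfl⟩
        · rintro ⟨⟨c, zr⟩, ⟨-, hm⟩, rfl⟩
          simpa using hm
      rw [this]
      exact (Set.finite_univ.prod (finite_len m)).image _

def myAlt : Bool → ℕ → List Bool
  | _, 0 => []
  | a, (k+1) => a :: myAlt (!a) k

@[simp] lemma myAlt_zero (a : Bool) : myAlt a 0 = [] := rfl
@[simp] lemma myAlt_succ (a : Bool) (k : ℕ) : myAlt a (k+1) = a :: myAlt (!a) k := rfl

lemma bcompl_myAlt : ∀ (k : ℕ) (a : Bool), bcompl (myAlt a k) = myAlt (!a) k := by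
  intro k
  induction k with
  | zero => intro a; rfl
  | succ k ih =>
      intro a
      show (!a) :: bcompl (myAlt (!a) k) = (!a) :: myAlt (!(!a)) k
      rw [ih (!a)]

lemma myAlt_sublist (k : ℕ) : ∀ a : Bool, myAlt a k <+ myAlt a (k+1) := by
  induction k with
  | zero => intro a; simp
  | succ k ih =>
      intro a
      show a :: myAlt (!a) k <+ a :: myAlt (!a) (k+1)
      exact List.cons_sublist_cons.mpr (ih (!a))

lemma wpow_succ (p : List Bool) (i : ℕ) : wpow p (i+1) = p ++ wpow p i := by
  simp [wpow, List.replicate_succ]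

lemma wpow_even (a : Bool) (i : ℕ) : wpow [a, !a] i = myAlt a (2*i) := by
  induction i with
  | zero => rfl
  | succ i ih =>
      rw [wpow_succ, ih]
      have h2 : 2*(i+1) = (2*i) + 1 + 1 := by ring
      rw [h2]
      simp

lemma wpow_odd (a : Bool) (j : ℕ) : wpow [a, !a] j ++ [a] = myAlt a (2*j+1) := by
  induction j with
  | zero => simp [wpow]
  | succ j ih =>
      rw [wpow_succ, List.append_assoc, ih]
      have h2 : 2*(j+1)+1 = (2*j+1) + 1 + 1 := by ring
      rw [h2]
      simp

lemma isAlt_iff {w : List Bool} : IsAlt w ↔ ∃ a k, 1 ≤ k ∧ w = myAlt a k := by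
  constructor
  · rintro ⟨a, ⟨i, hi, rfl⟩ | ⟨j, rfl⟩⟩
    · exact ⟨a, 2*i, by omega, wpow_even a i⟩
    · exact ⟨a, 2*j+1, by omega, wpow_odd a j⟩
  · rintro ⟨a, k, hk, rfl⟩
    rcases Nat.even_or_odd k with ⟨i, hi⟩ | ⟨j, hj⟩
    · have hk2 : k = 2*i := by omega
      subst hk2
      exact ⟨a, Or.inl ⟨i, by omega, (wpow_even a i).symm⟩⟩
    · have hk2 : k = 2*j+1 := by omega
      subst hk2
      exact ⟨a, Or.inr ⟨j, (wpow_odd a j).symm⟩⟩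

lemma typeA_iff {x y : List Bool} : TypeA x y ↔
    ∃ (u s : List Bool) (a : Bool) (k : ℕ), 1 ≤ k ∧
      x = u ++ myAlt a k ++ s ∧ y = u ++ myAlt (!a) k ++ s := by
  constructor
  · rintro ⟨u, s, w, hw, rfl, rfl⟩
    obtain ⟨a, k, hk, rfl⟩ := isAlt_iff.mp hw
    exact ⟨u, s, a, k, hk, rfl, by rw [bcompl_myAlt]⟩
  · rintro ⟨u, s, a, k, hk, rfl, rfl⟩
    exact ⟨u, s, myAlt a k, isAlt_iff.mpr ⟨a, k, hk, rfl⟩, rfl, by rw [bcompl_myAlt]⟩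

lemma typeA_symm {x y : List Bool} (h : TypeA x y) : TypeA y x := by
  rw [typeA_iff] at h ⊢
  obtain ⟨u, s, a, k, hk, hx, hy⟩ := h
  exact ⟨u, s, !a, k, hk, hy, by simpa using hx⟩

lemma typeB_symm {x y : List Bool} (h : TypeB x y) : TypeB y x := by
  obtain ⟨u, v, w, a, b, hs⟩ := h
  exact ⟨u, v, w, a, b, by rw [Set.pair_comm]; exact hs⟩


/-- Strip a common head for Type-A. -/
lemma typeA_cons {g : Bool} {p q : List Bool} :
    TypeA (g :: p) (g :: q) ↔ TypeA p q := by
  rw [typeA_iff, typeA_iff]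
  constructor
  · rintro ⟨u, s, a, k, hk, hx, hy⟩
    cases u with
    | nil =>
        obtain ⟨k, rfl⟩ : ∃ k', k = k' + 1 := ⟨k-1, by omega⟩
        simp only [myAlt_succ, List.nil_append, List.cons_append, List.cons.injEq] at hx hy
        rw [hx.1] at hy
        simp at hy
    | cons u0 u' =>
        simp only [List.cons_append, List.cons.injEq] at hx hy
        exact ⟨u', s, a, k, hk, hx.2, hy.2⟩
  · rintro ⟨u, s, a, k, hk, rfl, rfl⟩
    exact ⟨g :: u, s, a, k, hk, rfl, rfl⟩

/-- Strip a common head for Type-B. -/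
lemma typeB_cons {g : Bool} {p q : List Bool} :
    TypeB (g :: p) (g :: q) ↔ TypeB p q := by
  constructor
  · rintro ⟨u, v, w, a, b, hs⟩
    rcases Set.pair_eq_pair_iff.mp hs with ⟨h1, h2⟩ | ⟨h1, h2⟩
    · cases u with
      | nil =>
          simp only [List.nil_append, List.cons_append, List.cons.injEq] at h1 h2
          rw [h1.1] at h2; simp at h2
      | cons u0 u' =>
          simp only [List.cons_append, List.cons.injEq] at h1 h2
          exact ⟨u', v, w, a, b, Set.pair_eq_pair_iff.mpr (Or.inl ⟨h1.2, h2.2⟩)⟩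
    · cases u with
      | nil =>
          simp only [List.nil_append, List.cons_append, List.cons.injEq] at h1 h2
          rw [h1.1] at h2; simp at h2
      | cons u0 u' =>
          simp only [List.cons_append, List.cons.injEq] at h1 h2
          exact ⟨u', v, w, a, b, Set.pair_eq_pair_iff.mpr (Or.inr ⟨h1.2, h2.2⟩)⟩
  · rintro ⟨u, v, w, a, b, hs⟩
    rcases Set.pair_eq_pair_iff.mp hs with ⟨h1, h2⟩ | ⟨h1, h2⟩
    · exact ⟨g :: u, v, w, a, b, Set.pair_eq_pair_iff.mpr
        (Or.inl ⟨by rw [h1]; rfl, by rw [h2]; rfl⟩)⟩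
    · exact ⟨g :: u, v, w, a, b, Set.pair_eq_pair_iff.mpr
        (Or.inr ⟨by rw [h1]; rfl, by rw [h2]; rfl⟩)⟩

/-- The shift lemma: a pair in "shift form" is Type-A or Type-B confusable. -/
lemma shift_lemma : ∀ (k : ℕ) (s u v : List Bool) (e f : Bool) (p q : List Bool),
    s.length = k → p = u ++ (e :: s) ++ v → q = u ++ s ++ f :: v → p ≠ q →
    TypeA p q ∨ TypeB p q := by
  intro k
  induction k with
  | zero =>
      intro s u v e f p q hs hp hq hne
      have hs0 : s = [] := List.length_eq_zero_iff.mp hs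
      have hef : f = !e := by
        by_contra hc
        have hfe : f = e := by cases f <;> cases e <;> simp_all
        apply hne
        rw [hp, hq, hs0, hfe]
        simp
      left
      rw [typeA_iff]
      refine ⟨u, v, e, 1, le_refl 1, ?_, ?_⟩
      · rw [hp, hs0]; simp
      · rw [hq, hs0, hef]; simp
  | succ k ih =>
      intro s u v e f p q hs hp hq hne
      match s with
      | s0 :: s1 =>
        by_cases h0 : s0 = e
        · exact ih s1 (u ++ [e]) v e f p q (by simp at hs; omega)
            (by rw [hp, h0]; simp) (by rw [hq, h0]; simp) hne
        · have h0' : s0 = !e := by cases s0 <;> cases e <;> simp_all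
          rcases List.eq_nil_or_concat s1 with hs1 | ⟨V, B, hs1⟩
          · by_cases hf : f = e
            · left
              rw [typeA_iff]
              refine ⟨u, v, e, 2, by omega, ?_, ?_⟩
              · rw [hp, h0', hs1]; simp
              · rw [hq, h0', hs1, hf]; simp
            · have hf' : f = !e := by cases f <;> cases e <;> simp_all
              left
              rw [typeA_iff]
              refine ⟨u, (!e) :: v, e, 1, le_refl 1, ?_, ?_⟩
              · rw [hp, h0', hs1]; simp
              · rw [hq, h0', hs1, hf']; simp
          · by_cases hf : f = B
            · refine ih ((!e) :: V) u (B :: v) e B p q ?_ ?_ ?_ hne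
              · rw [hs1] at hs; simp at hs ⊢; omega
              · rw [hp, h0', hs1]; simp
              · rw [hq, h0', hs1, hf]; simp
            · have hf' : f = !B := by cases f <;> cases B <;> simp_all
              right
              refine ⟨u, V, v, e, B, Set.pair_eq_pair_iff.mpr (Or.inl ⟨?_, ?_⟩)⟩
              · rw [hp, h0', hs1]; simp
              · rw [hq, h0', hs1, hf']; simp


/-- Mutual one-sided sublists force the alternating complement structure. -/
lemma alt_of_mutual : ∀ (p' q' : List Bool) (e : Bool),
    p'.length = q'.length → p' <+ (!e) :: q' → q' <+ e :: p' →
    ∃ (s : List Bool) (k : ℕ), 1 ≤ k ∧ e :: p' = myAlt e k ++ s ∧ (!e) :: q' = myAlt (!e) k ++ s := by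
  intro p'
  induction p' with
  | nil =>
      intro q' e hl _ _
      have hq : q' = [] := List.length_eq_zero_iff.mp (by simpa using hl.symm)
      subst hq
      exact ⟨[], 1, le_refl 1, by simp, by simp⟩
  | cons h0 p'' ih =>
      intro q' e hl hpq hqp
      by_cases hpqeq : h0 :: p'' = q'
      · exact ⟨h0 :: p'', 1, le_refl 1, by simp, by rw [← hpqeq]; simp⟩
      · have hh0 : h0 = !e := by
          by_contra hc
          exact hpqeq ((cons_sublist_of_ne hpq hc).eq_of_length hl)
      
        match q', hl, hpq, hqp, hpqeq with
        | q0 :: q'', hl, hpq, hqp, hpqeq =>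
          have hq0 : q0 = e := by
            by_contra hc
            have h1 : q0 :: q'' <+ h0 :: p'' := cons_sublist_of_ne hqp hc
            exact hpqeq (h1.eq_of_length (by simpa using hl.symm)).symm
          have hl'' : p''.length = q''.length := by simpa using hl
          rw [hh0] at hpq
          have hpq'' : p'' <+ e :: q'' := by
            have h2 := List.cons_sublist_cons.mp hpq
            rwa [hq0] at h2
          rw [hq0] at hqp
          have hqp'' : q'' <+ (!e) :: p'' := by
            have h2 := List.cons_sublist_cons.mp hqp
            rwa [hh0] at h2
          obtain ⟨s, k, hk, hA, hB⟩ := ih q'' (!e) hl''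
            (by rw [Bool.not_not]; exact hpq'') hqp''
          rw [Bool.not_not] at hB
          refine ⟨s, k + 1, by omega, ?_, ?_⟩
          · rw [myAlt_succ, List.cons_append, ← hA, hh0]
          · rw [myAlt_succ, Bool.not_not, List.cons_append, ← hB, hq0]

/-- Type-A (heads differing) gives mutual one-sided sublists. -/
lemma mutual_of_typeA {e : Bool} {p' q' : List Bool} (h : TypeA (e :: p') ((!e) :: q')) :
    p' <+ (!e) :: q' ∧ q' <+ e :: p' := by
  rw [typeA_iff] at h
  obtain ⟨u, s, a, k, hk, hp, hq⟩ := h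
  cases u with
  | cons u0 u' =>
      simp only [List.cons_append, List.cons.injEq] at hp hq
      rw [← hp.1] at hq
      simp at hq
  | nil =>
      obtain ⟨k, rfl⟩ : ∃ k', k = k' + 1 := ⟨k - 1, by omega⟩
      simp only [List.nil_append, myAlt_succ, List.cons_append, List.cons.injEq] at hp hq
      obtain ⟨hea, hp2⟩ := hp
      obtain ⟨hea', hq2⟩ := hq
      subst hea
      constructor
      · have h3 : myAlt (!e) k ++ s <+ myAlt (!e) (k+1) ++ s :=
          (myAlt_sublist k (!e)).append_right s
        rw [myAlt_succ, Bool.not_not, List.cons_append] at h3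
        rw [hp2, hq2]
        simp only [Bool.not_not]
        exact h3
      · have h4 : myAlt e k ++ s <+ myAlt e (k+1) ++ s :=
          (myAlt_sublist k e).append_right s
        rw [myAlt_succ, List.cons_append] at h4
        rw [hp2, hq2]
        simp only [Bool.not_not]
        exact h4

/-- Type-B (heads differing) gives a one-sided sublist. -/
lemma sublist_of_typeB {e : Bool} {p' q' : List Bool} (h : TypeB (e :: p') ((!e) :: q')) :
    p' <+ (!e) :: q' ∨ q' <+ e :: p' := by
  obtain ⟨u, v, w, a, b, hs⟩ := h
  rcases Set.pair_eq_pair_iff.mp hs with ⟨h1, h2⟩ | ⟨h1, h2⟩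
  · cases u with
    | cons u0 u' =>
        simp only [List.cons_append, List.cons.injEq] at h1 h2
        rw [← h1.1] at h2
        simp at h2
    | nil =>
        simp only [List.nil_append, List.cons_append, List.cons.injEq] at h1 h2
        left
        rw [h1.2, h2.2, h1.1]
        refine List.cons_sublist_cons.mpr ?_
        simp only [List.append_assoc]
        refine (List.append_sublist_append_left v).mpr ?_
        exact List.cons_sublist_cons.mpr (List.sublist_cons_self _ _)
  · cases u with
    | cons u0 u' =>
        simp only [List.cons_append, List.cons.injEq] at h1 h2
        rw [← h1.1] at h2
        simp at h2
    | nil =>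
        simp only [List.nil_append, List.cons_append, List.cons.injEq] at h1 h2
        right
        rw [h1.2, h2.2, h1.1]
        refine List.cons_sublist_cons.mpr ?_
        simp only [List.append_assoc]
        refine (List.append_sublist_append_left v).mpr ?_
        exact List.cons_sublist_cons.mpr (List.sublist_cons_self _ _)


/-- Common supersequences of length `|p|+1`. -/
def CS (p q : List Bool) : Set (List Bool) :=
  {z | z.length = p.length + 1 ∧ p <+ z ∧ q <+ z}

lemma CS_finite (p q : List Bool) : (CS p q).Finite :=
  (finite_len (p.length + 1)).subset (fun _ hz => hz.1)

lemma CS_cons {g : Bool} {p q : List Bool} (hne : p ≠ q) (hlen : p.length = q.length) :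
    CS (g :: p) (g :: q) = (g :: ·) '' CS p q := by
  ext z
  constructor
  · rintro ⟨hz, hp, hq⟩
    match z with
    | [] => simp at hz
    | z0 :: zr =>
      by_cases h0 : z0 = g
      · subst h0
        exact ⟨zr, ⟨by simpa using hz, List.cons_sublist_cons.mp hp,
          List.cons_sublist_cons.mp hq⟩, rfl⟩
      · exfalso
        have h1 : g :: p <+ zr := cons_sublist_of_ne hp (fun h => h0 h.symm)
        have hzr : g :: p = zr := h1.eq_of_length (by simp at hz ⊢; omega)
        have h2 : g :: q <+ zr := cons_sublist_of_ne hq (fun h => h0 h.symm)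
        rw [← hzr] at h2
        have := List.cons_sublist_cons.mp h2
        exact hne ((this.eq_of_length hlen.symm).symm)
  · rintro ⟨zr, ⟨hz, hp, hq⟩, rfl⟩
    exact ⟨by simpa using hz, List.cons_sublist_cons.mpr hp, List.cons_sublist_cons.mpr hq⟩

lemma CS_of_ne (e : Bool) (p' q' : List Bool) (hl : p'.length = q'.length) :
    CS (e :: p') ((!e) :: q') =
      {z | z = e :: (!e) :: q' ∧ p' <+ (!e) :: q'} ∪
      {z | z = (!e) :: e :: p' ∧ q' <+ e :: p'} := by
  ext z
  simp only [Set.mem_union, Set.mem_setOf_eq]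
  constructor
  · rintro ⟨hz, hp, hq⟩
    match z with
    | [] => simp at hz
    | z0 :: zr =>
      by_cases h0 : z0 = e
      · rw [h0] at hz hp hq ⊢
        left
        have hq1 : (!e) :: q' <+ zr := cons_sublist_of_ne hq (by simp)
        have hzr : (!e) :: q' = zr := hq1.eq_of_length (by simp at hz ⊢; omega)
        have hp1 : p' <+ zr := List.cons_sublist_cons.mp hp
        rw [← hzr] at hp1
        exact ⟨by rw [← hzr], hp1⟩
      · have h0' : z0 = !e := by cases z0 <;> cases e <;> simp_all
        rw [h0'] at hz hp hq ⊢
        right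
        have hp1 : e :: p' <+ zr := cons_sublist_of_ne hp (by simp)
        have hzr : e :: p' = zr := hp1.eq_of_length (by simp at hz ⊢; omega)
        have hq1 : q' <+ zr := List.cons_sublist_cons.mp hq
        rw [← hzr] at hq1
        exact ⟨by rw [← hzr], hq1⟩
  · rintro (⟨rfl, hs⟩ | ⟨rfl, hs⟩)
    · exact ⟨by simp [hl], List.cons_sublist_cons.mpr hs, List.sublist_cons_self _ _⟩
    · exact ⟨by simp, List.sublist_cons_self _ _, List.cons_sublist_cons.mpr hs⟩

/-- Main classification of the number of common supersequences of length `m+1`. -/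
lemma classify : ∀ (p q : List Bool), p ≠ q → p.length = q.length →
    (TypeA p q → (CS p q).ncard = 2) ∧
    ((TypeB p q ∧ ¬ TypeA p q) → (CS p q).ncard = 1) ∧
    ((¬ TypeA p q ∧ ¬ TypeB p q) → (CS p q).ncard = 0) := by
  intro p
  induction p with
  | nil =>
      intro q hne hl
      have hq : q = [] := List.length_eq_zero_iff.mp hl.symm
      exact absurd hq.symm hne
  | cons e p' ih =>
      intro q hne hl
      match q, hl with
      | [], hl => simp at hl
      | q0 :: q', hl =>
        by_cases hq0 : q0 = e
        · subst hq0
          have hne' : p' ≠ q' := fun h => hne (by rw [h])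
          have hl' : p'.length = q'.length := by simpa using hl
          have hcard : (CS (q0 :: p') (q0 :: q')).ncard = (CS p' q').ncard := by
            rw [CS_cons hne' hl']
            exact Set.ncard_image_of_injective _ (fun a b h => by injection h)
          obtain ⟨c1, c2, c3⟩ := ih q' hne' hl'
          refine ⟨?_, ?_, ?_⟩
          · intro hA; rw [hcard]; exact c1 (typeA_cons.mp hA)
          · rintro ⟨hB, hA⟩; rw [hcard]
            exact c2 ⟨typeB_cons.mp hB, fun h => hA (typeA_cons.mpr h)⟩
          · rintro ⟨hA, hB⟩; rw [hcard]
            exact c3 ⟨fun h => hA (typeA_cons.mpr h), fun h => hB (typeB_cons.mpr h)⟩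
        · have hq0' : q0 = !e := by cases q0 <;> cases e <;> simp_all
          subst hq0'
          have hl' : p'.length = q'.length := by simpa using hl
          have hset := CS_of_ne e p' q' hl'
          have hw : (e :: (!e) :: q') ≠ ((!e) :: e :: p') := by simp
          refine ⟨?_, ?_, ?_⟩
          · intro hA
            obtain ⟨hc1, hc2⟩ := mutual_of_typeA hA
            rw [hset]
            have heq : ({z | z = e :: (!e) :: q' ∧ p' <+ (!e) :: q'} ∪
                {z | z = (!e) :: e :: p' ∧ q' <+ e :: p'}) =
                ({e :: (!e) :: q', (!e) :: e :: p'} : Set (List Bool)) := by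
              ext z; simp [hc1, hc2]; tauto
            rw [heq]
            exact Set.ncard_pair hw
          · rintro ⟨hB, hA⟩
            have hnand : ¬ (p' <+ (!e) :: q' ∧ q' <+ e :: p') := by
              rintro ⟨hc1, hc2⟩
              apply hA
              obtain ⟨s, k, hk, h1, h2⟩ := alt_of_mutual p' q' e hl' hc1 hc2
              rw [typeA_iff]
              exact ⟨[], s, e, k, hk, by simpa using h1, by simpa using h2⟩
            rcases sublist_of_typeB hB with hc1 | hc2
            · have hc2' : ¬ q' <+ e :: p' := fun hc2 => hnand ⟨hc1, hc2⟩
              rw [hset]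
              have heq : ({z | z = e :: (!e) :: q' ∧ p' <+ (!e) :: q'} ∪
                  {z | z = (!e) :: e :: p' ∧ q' <+ e :: p'}) =
                  ({e :: (!e) :: q'} : Set (List Bool)) := by
                ext z; simp [hc1, hc2']
              rw [heq, Set.ncard_singleton]
            · have hc1' : ¬ p' <+ (!e) :: q' := fun hc1 => hnand ⟨hc1, hc2⟩
              rw [hset]
              have heq : ({z | z = e :: (!e) :: q' ∧ p' <+ (!e) :: q'} ∪
                  {z | z = (!e) :: e :: p' ∧ q' <+ e :: p'}) =
                  ({(!e) :: e :: p'} : Set (List Bool)) := by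
                ext z; simp [hc1', hc2]
              rw [heq, Set.ncard_singleton]
          · rintro ⟨hA, hB⟩
            have hc1 : ¬ p' <+ (!e) :: q' := by
              intro hc
              obtain ⟨U, V, C, hUV, hzz⟩ := exists_insert hc (by simp; omega)
              rcases shift_lemma U.length U [] V e C (e :: p') ((!e) :: q') rfl
                (by rw [hUV]; simp) (by simpa using hzz) hne with h | h
              exacts [hA h, hB h]
            have hc2 : ¬ q' <+ e :: p' := by
              intro hc
              obtain ⟨U, V, C, hUV, hzz⟩ := exists_insert hc (by simp; omega)
              rcases shift_lemma U.length U [] V (!e) C ((!e) :: q') (e :: p') rfl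
                (by rw [hUV]; simp) (by simpa using hzz) (Ne.symm hne) with h | h
              exacts [hA (typeA_symm h), hB (typeB_symm h)]
            rw [hset]
            have heq : ({z | z = e :: (!e) :: q' ∧ p' <+ (!e) :: q'} ∪
                {z | z = (!e) :: e :: p' ∧ q' <+ e :: p'}) = (∅ : Set (List Bool)) := by
              ext z; simp [hc1, hc2]
            rw [heq]
            exact Set.ncard_empty _


lemma ncard_insBall_one : ∀ w : List Bool, (insBall 1 w).ncard = w.length + 2 := by
  intro w
  induction w with
  | nil =>
      have heq : insBall 1 [] = {[false], [true]} := by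
        ext z
        constructor
        · rintro ⟨hz, -⟩
          match z with
          | [c] => cases c <;> simp
        · rintro (rfl | rfl) <;> exact ⟨rfl, List.nil_sublist _⟩
      rw [heq, Set.ncard_pair (by simp)]
      simp
  | cons g w ih =>
      have hsplit : insBall 1 (g :: w) = (g :: ·) '' insBall 1 w ∪ {(!g) :: g :: w} := by
        ext z
        constructor
        · rintro ⟨hz, hsub⟩
          match z with
          | [] => simp at hz
          | z0 :: zr =>
            by_cases h0 : z0 = g
            · left
              refine ⟨zr, ⟨by simpa using hz, ?_⟩, by rw [h0]⟩
              rw [h0] at hsub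
              exact List.cons_sublist_cons.mp hsub
            · right
              have h1 : g :: w <+ zr := cons_sublist_of_ne hsub (fun h => h0 h.symm)
              have h2 : g :: w = zr := h1.eq_of_length (by simp at hz ⊢; omega)
              have h0' : z0 = !g := by cases z0 <;> cases g <;> simp_all
              simp [h0', ← h2]
        · rintro (⟨zr, ⟨hz, hsub⟩, rfl⟩ | rfl)
          · exact ⟨by simpa using hz, List.cons_sublist_cons.mpr hsub⟩
          · exact ⟨by simp, List.sublist_cons_self _ _⟩
      have hdis : Disjoint ((g :: ·) '' insBall 1 w) {(!g) :: g :: w} := by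
        rw [Set.disjoint_singleton_right]
        rintro ⟨zr, -, hcons⟩
        have : g = !g := by injection hcons
        simp at this
      rw [hsplit, Set.ncard_union_eq hdis
        (((finite_len (w.length + 1)).subset (fun _ hz => hz.1)).image _)
        (Set.finite_singleton _),
        Set.ncard_image_of_injective _ (fun a b h => by injection h), ih,
        Set.ncard_singleton]
      simp


end Stmt5Aux

open Stmt5Aux in
theorem stmt5 (n : ℕ) (hn : 3 ≤ n) (a b : Bool) (v : List Bool)
    (hv : v.length = n - 3) (x y : List Bool)
    (hx : x = [a, !a] ++ v ++ [b]) (hy : y = [!a] ++ v ++ [b, !b])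
    (h : (insBall 1 x ∩ insBall 1 y).ncard = 1) :
    ((insBall 2 x ∩ insBall 2 y).ncard = n + 3 ↔
        (¬ TypeA ([a, !a] ++ v) (v ++ [b, !b]) ∧
         ¬ TypeB ([a, !a] ++ v) (v ++ [b, !b]))) ∧
    ((insBall 2 x ∩ insBall 2 y).ncard = n + 4 ↔
        (TypeB ([a, !a] ++ v) (v ++ [b, !b]) ∧
         ¬ TypeA ([a, !a] ++ v) (v ++ [b, !b]))) ∧
    ((insBall 2 x ∩ insBall 2 y).ncard = n + 5 ↔
        TypeA ([a, !a] ++ v) (v ++ [b, !b])) := by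
  subst hx hy
  obtain ⟨L, rfl⟩ : ∃ L, n = L + 3 := ⟨n - 3, by omega⟩
  have hvL : v.length = L := by omega
  clear hn hv
  have hxlen : ([a, !a] ++ v ++ [b] : List Bool).length = L + 3 := by simp [hvL]
  have hylen : ([!a] ++ v ++ [b, !b] : List Bool).length = L + 3 := by simp [hvL]
  have hwy : ([a, !a] ++ v ++ [b, !b] : List Bool) = a :: ([!a] ++ v ++ [b, !b]) := by simp
  have hwx : ([a, !a] ++ v ++ [b, !b] : List Bool) = ([a, !a] ++ v ++ [b]) ++ [!b] := by simp
  have hxP : ([a, !a] ++ v ++ [b] : List Bool) = ([a, !a] ++ v) ++ [b] := by simp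
  have hyQ : ([!a] ++ v ++ [b, !b] : List Bool) = (!a) :: (v ++ [b, !b]) := by simp
  have hQsnoc : (v ++ [b, !b] : List Bool) = (v ++ [b]) ++ [!b] := by simp
  -- Step 1 : P ≠ Q, using h
  have hPQne : ([a, !a] ++ v : List Bool) ≠ (v ++ [b, !b]) := by
    intro hPQ
    have hfin : (insBall 1 ([a, !a] ++ v ++ [b]) ∩ insBall 1 ([!a] ++ v ++ [b, !b])).Finite :=
      (finite_len (L + 4)).subset (by
        rintro z ⟨⟨hz, -⟩, -⟩
        show z.length = L + 4
        rw [hz, hxlen])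
    have hw1 : ([a, !a] ++ v ++ [b, !b] : List Bool) ∈
        insBall 1 ([a, !a] ++ v ++ [b]) ∩ insBall 1 ([!a] ++ v ++ [b, !b]) := by
      refine ⟨⟨by simp, ?_⟩, ⟨by simp, ?_⟩⟩
      · rw [hwx]; exact List.sublist_append_left _ _
      · rw [hwy]; exact List.sublist_cons_self _ _
    have hw2 : ((!a) :: ([a, !a] ++ v ++ [b]) : List Bool) ∈
        insBall 1 ([a, !a] ++ v ++ [b]) ∩ insBall 1 ([!a] ++ v ++ [b, !b]) := by
      refine ⟨⟨by simp, List.sublist_cons_self _ _⟩, ⟨by simp, ?_⟩⟩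
      rw [hyQ]
      refine List.cons_sublist_cons.mpr ?_
      rw [← hPQ, hxP]
      exact List.sublist_append_left _ _
    have hne12 : ([a, !a] ++ v ++ [b, !b] : List Bool) ≠ ((!a) :: ([a, !a] ++ v ++ [b])) := by
      rw [hwy]
      intro hcontra
      have : a = !a := by injection hcontra
      simp at this
    have h2 : 1 < (insBall 1 ([a, !a] ++ v ++ [b]) ∩ insBall 1 ([!a] ++ v ++ [b, !b])).ncard :=
      (Set.one_lt_ncard hfin).mpr ⟨_, hw1, _, hw2, hne12⟩
    omega
  -- Step 2 : splitting the two-insertion intersection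
  have hxw : ([a, !a] ++ v ++ [b] : List Bool) <+ ([a, !a] ++ v ++ [b, !b]) := by
    rw [hwx]; exact List.sublist_append_left _ _
  have hyw : ([!a] ++ v ++ [b, !b] : List Bool) <+ ([a, !a] ++ v ++ [b, !b]) := by
    rw [hwy]; exact List.sublist_cons_self _ _
  have hsplit : insBall 2 ([a, !a] ++ v ++ [b]) ∩ insBall 2 ([!a] ++ v ++ [b, !b]) =
      insBall 1 ([a, !a] ++ v ++ [b, !b]) ∪
      {z | z.length = L + 5 ∧ ([a, !a] ++ v ++ [b]) <+ z ∧
        ([!a] ++ v ++ [b, !b]) <+ z ∧ ¬ ([a, !a] ++ v ++ [b, !b]) <+ z} := by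
    ext z
    simp only [insBall, Set.mem_inter_iff, Set.mem_setOf_eq, Set.mem_union]
    constructor
    · rintro ⟨⟨hz1, hsx⟩, ⟨hz2, hsy⟩⟩
      by_cases hwz : ([a, !a] ++ v ++ [b, !b] : List Bool) <+ z
      · left; exact ⟨by rw [hz1]; simp, hwz⟩
      · right; exact ⟨by rw [hz1, hxlen], hsx, hsy, hwz⟩
    · rintro (⟨hz, hwz⟩ | ⟨hz, hsx, hsy, hwz⟩)
      · exact ⟨⟨by rw [hz]; simp, hxw.trans hwz⟩, ⟨by rw [hz]; simp, hyw.trans hwz⟩⟩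
      · exact ⟨⟨by rw [hz, hxlen], hsx⟩, ⟨by rw [hz, hylen], hsy⟩⟩
  have hdisj : Disjoint (insBall 1 ([a, !a] ++ v ++ [b, !b]))
      {z | z.length = L + 5 ∧ ([a, !a] ++ v ++ [b]) <+ z ∧
        ([!a] ++ v ++ [b, !b]) <+ z ∧ ¬ ([a, !a] ++ v ++ [b, !b]) <+ z} := by
    rw [Set.disjoint_left]
    rintro z ⟨-, hwz⟩ ⟨-, -, -, hnz⟩
    exact hnz hwz
  have hfinF : (insBall 1 ([a, !a] ++ v ++ [b, !b])).Finite :=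
    (finite_len _).subset (fun z hz => hz.1)
  have hfinE : ({z | z.length = L + 5 ∧ ([a, !a] ++ v ++ [b]) <+ z ∧
      ([!a] ++ v ++ [b, !b]) <+ z ∧ ¬ ([a, !a] ++ v ++ [b, !b]) <+ z} :
      Set (List Bool)).Finite :=
    (finite_len (L + 5)).subset (fun z hz => hz.1)
  -- Step 3 : the extra set is the image of CS P Q
  have hEimg : {z | z.length = L + 5 ∧ ([a, !a] ++ v ++ [b]) <+ z ∧
      ([!a] ++ v ++ [b, !b]) <+ z ∧ ¬ ([a, !a] ++ v ++ [b, !b]) <+ z} =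
      (fun z' => (!a) :: (z' ++ [b])) '' CS ([a, !a] ++ v) (v ++ [b, !b]) := by
    ext z
    constructor
    · rintro ⟨hz, hsx, hsy, hnw⟩
      match z, hz, hsx, hsy, hnw with
      | [], hz, _, _, _ => simp only [List.length_nil] at hz; omega
      | z0 :: zr, hz, hsx, hsy, hnw =>
        have hz0 : z0 = !a := by
          by_contra hc
          have hz0a : z0 = a := by cases z0 <;> cases a <;> simp_all
          apply hnw
          have hy' := hsy
          rw [hyQ, hz0a] at hy'
          have h2 : (!a) :: (v ++ [b, !b]) <+ zr := cons_sublist_of_ne hy' (by simp)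
          rw [hwy, hz0a, hyQ]
          exact List.cons_sublist_cons.mpr h2
        rcases List.eq_nil_or_concat zr with rfl | ⟨z', B, hzr⟩
        · simp only [List.length_cons, List.length_nil] at hz; omega
        · rw [List.concat_eq_append] at hzr
          subst hzr
          have hB : B = b := by
            by_contra hc
            have hBb : B = !b := by cases B <;> cases b <;> simp_all
            apply hnw
            have hx2 : ([a, !a] ++ v) ++ [b] <+ (z0 :: z') ++ [B] := by
              rw [← hxP]; simpa using hsx
            rw [hBb] at hx2
            have hx3 := snoc_sublist_of_ne hx2 (by simp)
            have hx4 := hx3.append_right [!b]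
            rw [hwx, hxP, hBb]
            simpa using hx4
          subst hz0
          rw [hB] at hz hsx hsy hnw ⊢
          refine ⟨z', ⟨?_, ?_, ?_⟩, rfl⟩
          · have hz2 : z'.length + 2 = L + 5 := by simpa using hz
            simp only [List.length_append, List.length_cons, List.length_nil]
            simp [hvL]
            omega
          · have hxc : ([a, !a] ++ v ++ [b] : List Bool) = a :: ([!a] ++ v ++ [b]) := by simp
            have hx2 := hsx
            rw [hxc] at hx2
            have h2 := cons_sublist_of_ne hx2 (by simp)
            rw [← hxc, hxP] at h2
            exact (List.append_sublist_append_right [b]).mp h2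
          · have hy2 := hsy
            rw [hyQ] at hy2
            have h2 := List.cons_sublist_cons.mp hy2
            rw [hQsnoc] at h2
            have h3 := snoc_sublist_of_ne h2 (by simp)
            rw [hQsnoc]
            exact h3
    · rintro ⟨z', ⟨hzl, hP, hQ⟩, rfl⟩
      have hzl' : z'.length = L + 3 := by
        rw [hzl]; simp [hvL]
      refine ⟨?_, ?_, ?_, ?_⟩
      · simp [hzl']
      · rw [hxP]
        exact (hP.append_right [b]).cons (!a)
      · rw [hyQ]
        exact List.cons_sublist_cons.mpr (hQ.trans (List.sublist_append_left _ _))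
      · intro hwz
        rw [hwy] at hwz
        have h2 := cons_sublist_of_ne hwz (by simp)
        rw [← hwy, hwx] at h2
        have h3 := snoc_sublist_of_ne h2 (by simp)
        have h4 := h3.length_le
        simp only [List.length_append, List.length_cons, List.length_nil, hvL, hzl'] at h4
        omega
  have hinj : Function.Injective (fun z' : List Bool => (!a) :: (z' ++ [b])) := by
    intro a1 a2 hh
    simp only at hh
    injection hh with _ h2
    exact List.append_cancel_right h2
  have hPQlen : ([a, !a] ++ v : List Bool).length = (v ++ [b, !b]).length := by simp
  obtain ⟨c1, c2, c3⟩ := classify ([a, !a] ++ v) (v ++ [b, !b]) hPQne hPQlen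
  have hcount : (insBall 2 ([a, !a] ++ v ++ [b]) ∩ insBall 2 ([!a] ++ v ++ [b, !b])).ncard =
      L + 6 + (CS ([a, !a] ++ v) (v ++ [b, !b])).ncard := by
    rw [hsplit, Set.ncard_union_eq hdisj hfinF hfinE, ncard_insBall_one,
      hEimg, Set.ncard_image_of_injective _ hinj]
    simp [hvL]
  rw [hcount]
  refine ⟨⟨?_, ?_⟩, ⟨?_, ?_⟩, ⟨?_, ?_⟩⟩
  · intro hc
    by_cases hA : TypeA ([a, !a] ++ v) (v ++ [b, !b])
    · have := c1 hA; omega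
    · by_cases hB : TypeB ([a, !a] ++ v) (v ++ [b, !b])
      · have := c2 ⟨hB, hA⟩; omega
      · exact ⟨hA, hB⟩
  · rintro ⟨hA, hB⟩
    have := c3 ⟨hA, hB⟩
    omega
  · intro hc
    by_cases hA : TypeA ([a, !a] ++ v) (v ++ [b, !b])
    · have := c1 hA; omega
    · by_cases hB : TypeB ([a, !a] ++ v) (v ++ [b, !b])
      · exact ⟨hB, hA⟩
      · have := c3 ⟨hA, hB⟩; omega
  · rintro ⟨hB, hA⟩
    have := c2 ⟨hB, hA⟩
    omega
  · intro hc
    by_cases hA : TypeA ([a, !a] ++ v) (v ++ [b, !b])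
    · exact hA
    · by_cases hB : TypeB ([a, !a] ++ v) (v ++ [b, !b])
      · have := c2 ⟨hB, hA⟩; omega
      · have := c3 ⟨hA, hB⟩; omega
  · intro hA
    have := c1 hA
    omega
end

section
/- Let n ≥ 4 and let x, y be distinct binary sequences of length n. Then: (i) |I_1(x) ∩ I_1(y)| = 2 if and only if |I_2(x) ∩ I_2(y)| = 2n + 4; (ii) |I_1(x) ∩ I_1(y)| = 1 if and only if n + 3 ≤ |I_2(x) ∩ I_2(y)| ≤ n + 5; (iii) |I_1(x) ∩ I_1(y)| = 0 if and only if |I_2(x) ∩ I_2(y)| ≤ 6. -/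
open List

namespace Stmt6Aux

def allW : ℕ → Finset (List Bool)
  | 0 => {[]}
  | m+1 => (allW m).image (List.cons false) ∪ (allW m).image (List.cons true)

lemma mem_allW : ∀ (m : ℕ) (z : List Bool), z ∈ allW m ↔ z.length = m
  | 0, z => by simp [allW, List.length_eq_zero_iff]
  | m+1, z => by
      cases z with
      | nil => simp [allW]
      | cons c z0 =>
          simp only [allW, Finset.mem_union, Finset.mem_image, List.cons.injEq,
            List.length_cons, Nat.add_right_cancel_iff]
          constructor
          · rintro (⟨w, hw, rfl, rfl⟩ | ⟨w, hw, rfl, rfl⟩) <;>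
              exact (mem_allW m w).1 hw
          · intro hlen
            cases c
            · exact Or.inl ⟨z0, (mem_allW m z0).2 hlen, rfl, rfl⟩
            · exact Or.inr ⟨z0, (mem_allW m z0).2 hlen, rfl, rfl⟩

lemma allW_succ (m : ℕ) (c : Bool) :
    allW (m+1) = (allW m).image (List.cons c) ∪ (allW m).image (List.cons (!c)) := by
  cases c
  · rfl
  · rw [show (!true) = false from rfl, allW]
    exact (Finset.union_comm _ _)

lemma card_split (m : ℕ) (c : Bool) (P : List Bool → Prop) [DecidablePred P] :
    ((allW (m+1)).filter P).card
      = ((allW m).filter (fun z => P (c :: z))).card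
        + ((allW m).filter (fun z => P ((!c) :: z))).card := by
  have hdisj : _root_.Disjoint
      (((allW m).filter (fun z => P (c :: z))).image (List.cons c))
      (((allW m).filter (fun z => P ((!c) :: z))).image (List.cons (!c))) := by
    refine Finset.disjoint_left.2 ?_
    rintro z hz1 hz2
    rw [Finset.mem_image] at hz1 hz2
    obtain ⟨w1, -, rfl⟩ := hz1
    obtain ⟨w2, -, h⟩ := hz2
    simp at h
  rw [allW_succ m c, Finset.filter_union, Finset.filter_image, Finset.filter_image,
    Finset.card_union_of_disjoint hdisj,
    Finset.card_image_of_injective _ (List.cons_injective)]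
  try rw [Finset.card_image_of_injective _ (List.cons_injective)]


def cnt (m : ℕ) (x y : List Bool) : ℕ :=
  ((allW m).filter (fun z => x.Sublist z ∧ y.Sublist z)).card

def scnt (m : ℕ) (v : List Bool) : ℕ :=
  ((allW m).filter (fun z => v.Sublist z)).card

lemma bool_ne_not (c : Bool) : c ≠ !c := by cases c <;> simp

lemma sublist_cons_ne {a b : Bool} (h : a ≠ b) (l r : List Bool) :
    (a :: l).Sublist (b :: r) ↔ (a :: l).Sublist r := by
  constructor
  · intro hs
    cases hs with
    | cons _ h' => exact h'
    | cons_cons => exact absurd rfl h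
  · exact fun hs => hs.cons b

lemma cnt_comm (m : ℕ) (x y : List Bool) : cnt m x y = cnt m y x := by
  unfold cnt
  congr 1
  apply Finset.filter_congr
  intro z _
  exact and_comm

lemma cnt_len_left {m : ℕ} {x y : List Bool} (h : x.length = m) :
    cnt m x y = if y.Sublist x then 1 else 0 := by
  unfold cnt
  by_cases hs : y.Sublist x
  · rw [if_pos hs]
    apply Finset.card_eq_one.2
    refine ⟨x, ?_⟩
    ext z
    simp only [Finset.mem_filter, mem_allW, Finset.mem_singleton]
    constructor
    · rintro ⟨hlen, hxz, hyz⟩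
      exact (hxz.eq_of_length (by omega)).symm
    · rintro rfl
      exact ⟨h, List.Sublist.refl _, hs⟩
  · rw [if_neg hs, Finset.card_eq_zero]
    ext z
    simp only [Finset.mem_filter, mem_allW, Finset.notMem_empty, iff_false, not_and]
    intro hlen hxz hyz
    exact hs ((hxz.eq_of_length (by omega)) ▸ hyz)

lemma cnt_len_right {m : ℕ} {x y : List Bool} (h : y.length = m) :
    cnt m x y = if x.Sublist y then 1 else 0 := by
  rw [cnt_comm]
  exact cnt_len_left h

lemma cnt_eqhead (m : ℕ) (c : Bool) (x0 y0 : List Bool) :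
    cnt (m+1) (c :: x0) (c :: y0) = cnt m x0 y0 + cnt m (c :: x0) (c :: y0) := by
  unfold cnt
  rw [card_split m c]
  congr 1
  · refine congrArg Finset.card (Finset.filter_congr fun z _ => ?_)
    rw [List.cons_sublist_cons, List.cons_sublist_cons]
  · refine congrArg Finset.card (Finset.filter_congr fun z _ => ?_)
    rw [sublist_cons_ne (bool_ne_not c), sublist_cons_ne (bool_ne_not c)]

lemma cnt_diffhead (m : ℕ) (a : Bool) (x0 y0 : List Bool) :
    cnt (m+1) (a :: x0) ((!a) :: y0)
      = cnt m x0 ((!a) :: y0) + cnt m (a :: x0) y0 := by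
  unfold cnt
  rw [card_split m a]
  congr 1
  · refine congrArg Finset.card (Finset.filter_congr fun z _ => ?_)
    rw [List.cons_sublist_cons, sublist_cons_ne (Ne.symm (bool_ne_not a))]
  · refine congrArg Finset.card (Finset.filter_congr fun z _ => ?_)
    rw [sublist_cons_ne (bool_ne_not a), List.cons_sublist_cons]

lemma cnt_of_sublist {m : ℕ} {u v : List Bool} (h : u.Sublist v) :
    cnt m u v = scnt m v := by
  unfold cnt scnt
  congr 1
  apply Finset.filter_congr
  intro z _
  exact ⟨fun hz => hz.2, fun hz => ⟨h.trans hz, hz⟩⟩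

lemma scnt_len {m : ℕ} {v : List Bool} (h : v.length = m) : scnt m v = 1 := by
  have h1 : cnt m v v = scnt m v := cnt_of_sublist (List.Sublist.refl v)
  rw [← h1, cnt_len_left h, if_pos (List.Sublist.refl v)]

lemma scnt_succ : ∀ (v : List Bool), scnt (v.length + 1) v = v.length + 2
  | [] => by
      unfold scnt
      rw [Finset.filter_true_of_mem (fun z _ => List.nil_sublist z)]
      rfl
  | c :: v0 => by
      show scnt (v0.length + 1 + 1) (c :: v0) = v0.length + 1 + 2
      unfold scnt
      rw [card_split (v0.length + 1) c]
      have h1 : ((allW (v0.length+1)).filter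
          (fun z => (c :: v0).Sublist (c :: z))).card = scnt (v0.length+1) v0 := by
        unfold scnt
        congr 1
        apply Finset.filter_congr
        intro z _
        rw [List.cons_sublist_cons]
      have h2 : ((allW (v0.length+1)).filter
          (fun z => (c :: v0).Sublist ((!c) :: z))).card = scnt (v0.length+1) (c :: v0) := by
        unfold scnt
        congr 1
        apply Finset.filter_congr
        intro z _
        rw [sublist_cons_ne (bool_ne_not c)]
      rw [h1, h2, scnt_succ v0, scnt_len (by simp)]


lemma two_bound : ∀ (x y : List Bool), x ≠ y → y.length = x.length →
    cnt (x.length + 1) x y ≤ 2 := by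
  intro x
  induction x with
  | nil =>
      intro y hne hlen
      exact absurd (List.length_eq_zero_iff.1 hlen).symm hne
  | cons e x0 ih =>
      intro y hne hlen
      cases y with
      | nil => simp at hlen
      | cons c y0 =>
        simp only [List.length_cons, Nat.add_right_cancel_iff] at hlen
        simp only [List.length_cons]
        by_cases hc : c = e
        · subst hc
          have hne0 : x0 ≠ y0 := fun h => hne (by rw [h])
          have e1 := cnt_eqhead (x0.length + 1) c x0 y0
          have e2 : cnt (x0.length + 1) (c :: x0) (c :: y0) = 0 := by
            rw [cnt_len_left (by simp), if_neg]
            intro hsub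
            exact hne (hsub.eq_of_length (by simp [hlen])).symm
          have e3 := ih y0 hne0 hlen
          omega
        · have hc2 : c = !e := by cases e <;> cases c <;> simp_all
          subst hc2
          have e1 := cnt_diffhead (x0.length + 1) e x0 y0
          have e2 : cnt (x0.length + 1) x0 ((!e) :: y0) ≤ 1 := by
            rw [cnt_len_right (by simp [hlen])]
            split <;> omega
          have e3 : cnt (x0.length + 1) (e :: x0) y0 ≤ 1 := by
            rw [cnt_len_left (by simp)]
            split <;> omega
          omega

lemma three_bound : ∀ (v u : List Bool), ¬ u.Sublist v → u.length + 1 = v.length →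
    cnt (v.length + 1) u v ≤ 3 := by
  intro v
  induction v with
  | nil => intro u h hl; simp at hl
  | cons c v0 ih =>
      intro u hsub hlen
      cases u with
      | nil => exact absurd (List.nil_sublist _) hsub
      | cons e u0 =>
        simp only [List.length_cons, Nat.add_right_cancel_iff] at hlen
        simp only [List.length_cons]
        by_cases hc : e = c
        · subst hc
          have hsub0 : ¬ u0.Sublist v0 := fun h => hsub (List.cons_sublist_cons.2 h)
          have e1 := cnt_eqhead (v0.length + 1) e u0 v0
          have e2 : cnt (v0.length + 1) (e :: u0) (e :: v0) = 0 := by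
            rw [cnt_len_right (by simp), if_neg hsub]
          have e3 := ih u0 hsub0 hlen
          omega
        · have hc2 : c = !e := by cases e <;> cases c <;> simp_all
          subst hc2
          have e1 := cnt_diffhead (v0.length + 1) e u0 v0
          have e2 : cnt (v0.length + 1) u0 ((!e) :: v0) ≤ 1 := by
            rw [cnt_len_right (by simp)]
            split <;> omega
          have hne : (e :: u0) ≠ v0 := by
            intro h
            exact hsub (by rw [h]; exact List.sublist_cons_self (!e) v0)
          have e3 : cnt (v0.length + 1) (e :: u0) v0 ≤ 2 := by
            have h2 := two_bound (e :: u0) v0 hne (by simp; omega)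
            simp only [List.length_cons, hlen] at h2
            exact h2
          omega


lemma main_lemma : ∀ (x y : List Bool), x ≠ y → y.length = x.length →
    cnt (x.length + 1) x y ≤ 2 ∧
    (cnt (x.length + 1) x y = 2 → cnt (x.length + 2) x y = 2 * x.length + 4) ∧
    (cnt (x.length + 1) x y = 1 →
      x.length + 3 ≤ cnt (x.length + 2) x y ∧ cnt (x.length + 2) x y ≤ x.length + 5) ∧
    (cnt (x.length + 1) x y = 0 → cnt (x.length + 2) x y ≤ 6) := by
  intro x
  induction x with
  | nil =>
      intro y hne hlen
      exact absurd (List.length_eq_zero_iff.1 hlen).symm hne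
  | cons e x0 ih =>
      intro y hne hlen
      cases y with
      | nil => simp at hlen
      | cons c y0 =>
        simp only [List.length_cons, Nat.add_right_cancel_iff] at hlen
        simp only [List.length_cons]
        by_cases hc : c = e
        · -- equal heads
          subst hc
          have hne0 : x0 ≠ y0 := fun h => hne (by rw [h])
          obtain ⟨ile, i2, i1, i0⟩ := ih y0 hne0 hlen
          have e1 := cnt_eqhead (x0.length + 1) c x0 y0
          have z2 : cnt (x0.length + 1) (c :: x0) (c :: y0) = 0 := by
            rw [cnt_len_left (by simp), if_neg]
            intro hsub
            exact hne (hsub.eq_of_length (by simp [hlen])).symm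
          have e2 : cnt (x0.length + 1 + 2) (c :: x0) (c :: y0)
              = cnt (x0.length + 2) x0 y0 + cnt (x0.length + 1 + 1) (c :: x0) (c :: y0) :=
            cnt_eqhead (x0.length + 1 + 1) c x0 y0
          have hf : cnt (x0.length + 1) x0 y0 = 0 ∨ cnt (x0.length + 1) x0 y0 = 1 ∨
              cnt (x0.length + 1) x0 y0 = 2 := by omega
          rcases hf with h | h | h
          · have := i0 h; omega
          · have := i1 h; omega
          · have := i2 h; omega
        · -- different heads
          have hc2 : c = !e := by cases e <;> cases c <;> simp_all
          subst hc2
          have f_eq := cnt_diffhead (x0.length + 1) e x0 y0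
          have g_eq : cnt (x0.length + 1 + 2) (e :: x0) ((!e) :: y0)
              = cnt (x0.length + 2) x0 ((!e) :: y0) + cnt (x0.length + 2) (e :: x0) y0 :=
            cnt_diffhead (x0.length + 2) e x0 y0
          have hA : cnt (x0.length + 1) x0 ((!e) :: y0)
              = if x0.Sublist ((!e) :: y0) then 1 else 0 := cnt_len_right (by simp [hlen])
          have hB : cnt (x0.length + 1) (e :: x0) y0
              = if y0.Sublist (e :: x0) then 1 else 0 := cnt_len_left (by simp)
          by_cases hxy : x0.Sublist ((!e) :: y0) <;> by_cases hyx : y0.Sublist (e :: x0)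
          · -- both: f = 2
            rw [if_pos hxy] at hA
            rw [if_pos hyx] at hB
            have hC : cnt (x0.length + 2) x0 ((!e) :: y0) = x0.length + 3 := by
              rw [cnt_of_sublist hxy]
              have h := scnt_succ ((!e) :: y0)
              simp only [List.length_cons, hlen] at h
              exact h
            have hD : cnt (x0.length + 2) (e :: x0) y0 = x0.length + 3 := by
              rw [cnt_comm, cnt_of_sublist hyx]
              have h := scnt_succ (e :: x0)
              simp only [List.length_cons] at h
              exact h
            omega
          · -- f = 1 (x0 side)
            rw [if_pos hxy] at hA
            rw [if_neg hyx] at hB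
            have hC : cnt (x0.length + 2) x0 ((!e) :: y0) = x0.length + 3 := by
              rw [cnt_of_sublist hxy]
              have h := scnt_succ ((!e) :: y0)
              simp only [List.length_cons, hlen] at h
              exact h
            have hD : cnt (x0.length + 2) (e :: x0) y0 ≤ 3 := by
              have h := three_bound (e :: x0) y0 hyx (by simp [hlen])
              simp only [List.length_cons] at h
              rw [cnt_comm] at h
              exact h
            have hD1 : 0 < cnt (x0.length + 2) (e :: x0) y0 := by
              have hm : (e :: (!e) :: y0)
                  ∈ (allW (x0.length + 2)).filter
                    (fun z => (e :: x0).Sublist z ∧ y0.Sublist z) := by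
                rw [Finset.mem_filter, mem_allW]
                refine ⟨by simp only [List.length_cons, hlen], ?_, ?_⟩
                · exact List.cons_sublist_cons.2 hxy
                · exact (List.sublist_cons_self (!e) y0).cons e
              exact Finset.card_pos.2 ⟨_, hm⟩
            omega
          · -- f = 1 (y0 side)
            rw [if_neg hxy] at hA
            rw [if_pos hyx] at hB
            have hD : cnt (x0.length + 2) (e :: x0) y0 = x0.length + 3 := by
              rw [cnt_comm, cnt_of_sublist hyx]
              have h := scnt_succ (e :: x0)
              simp only [List.length_cons] at h
              exact h
            have hC : cnt (x0.length + 2) x0 ((!e) :: y0) ≤ 3 := by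
              have h := three_bound ((!e) :: y0) x0 hxy (by simp [hlen])
              simp only [List.length_cons, hlen] at h
              exact h
            have hC1 : 0 < cnt (x0.length + 2) x0 ((!e) :: y0) := by
              have hm : ((!e) :: e :: x0)
                  ∈ (allW (x0.length + 2)).filter
                    (fun z => x0.Sublist z ∧ ((!e) :: y0).Sublist z) := by
                rw [Finset.mem_filter, mem_allW]
                refine ⟨by simp only [List.length_cons], ?_, ?_⟩
                · exact (List.sublist_cons_self e x0).cons (!e)
                · exact List.cons_sublist_cons.2 hyx
              exact Finset.card_pos.2 ⟨_, hm⟩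
            omega
          · -- f = 0
            rw [if_neg hxy] at hA
            rw [if_neg hyx] at hB
            have hC : cnt (x0.length + 2) x0 ((!e) :: y0) ≤ 3 := by
              have h := three_bound ((!e) :: y0) x0 hxy (by simp [hlen])
              simp only [List.length_cons, hlen] at h
              exact h
            have hD : cnt (x0.length + 2) (e :: x0) y0 ≤ 3 := by
              have h := three_bound (e :: x0) y0 hyx (by simp [hlen])
              simp only [List.length_cons] at h
              rw [cnt_comm] at h
              exact h
            omega


lemma ncard_eq (t : ℕ) (x y : List Bool) (h : y.length = x.length) :
    (insBall t x ∩ insBall t y).ncard = cnt (x.length + t) x y := by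
  have hset : insBall t x ∩ insBall t y
      = ↑((allW (x.length + t)).filter (fun z => x.Sublist z ∧ y.Sublist z)) := by
    ext z
    simp only [insBall, Set.mem_inter_iff, Set.mem_setOf_eq, Finset.coe_filter, mem_allW, h]
    constructor
    · rintro ⟨⟨h1, h2⟩, h3, h4⟩
      exact ⟨h1, h2, h4⟩
    · rintro ⟨h1, h2, h3⟩
      exact ⟨⟨h1, h2⟩, h1, h3⟩
  rw [hset, Set.ncard_coe_finset]
  rfl

end Stmt6Aux

theorem stmt6 (n : ℕ) (hn : 4 ≤ n) (x y : List Bool)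
    (hx : x.length = n) (hy : y.length = n) (hne : x ≠ y) :
    ((insBall 1 x ∩ insBall 1 y).ncard = 2 ↔
        (insBall 2 x ∩ insBall 2 y).ncard = 2 * n + 4) ∧
    ((insBall 1 x ∩ insBall 1 y).ncard = 1 ↔
        (n + 3 ≤ (insBall 2 x ∩ insBall 2 y).ncard ∧
         (insBall 2 x ∩ insBall 2 y).ncard ≤ n + 5)) ∧
    ((insBall 1 x ∩ insBall 1 y).ncard = 0 ↔
        (insBall 2 x ∩ insBall 2 y).ncard ≤ 6) := by
  have hlen : y.length = x.length := by rw [hx, hy]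
  obtain ⟨hle, h2', h1', h0'⟩ := Stmt6Aux.main_lemma x y hne hlen
  rw [hx] at hle h2' h1' h0'
  have b1 : (insBall 1 x ∩ insBall 1 y).ncard = Stmt6Aux.cnt (n + 1) x y := by
    rw [Stmt6Aux.ncard_eq 1 x y hlen, hx]
  have b2 : (insBall 2 x ∩ insBall 2 y).ncard = Stmt6Aux.cnt (n + 2) x y := by
    rw [Stmt6Aux.ncard_eq 2 x y hlen, hx]
  rw [b1, b2]
  have hcase : Stmt6Aux.cnt (n + 1) x y = 0 ∨ Stmt6Aux.cnt (n + 1) x y = 1 ∨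
      Stmt6Aux.cnt (n + 1) x y = 2 := by omega
  rcases hcase with h | h | h
  · have := h0' h
    exact ⟨by omega, by omega, by omega⟩
  · have := h1' h
    exact ⟨by omega, by omega, by omega⟩
  · have := h2' h
    exact ⟨by omega, by omega, by omega⟩
end

section
/- Let n ≥ 4 and let N be an integer with n + 5 < N ≤ 2n + 4. A code C ⊆ {0,1}^n satisfies |I_2(x) ∩ I_2(y)| < N for all distinct x, y ∈ C if and only if it satisfies |I_1(x) ∩ I_1(y)| < 2 for all distinct x, y ∈ C. -/
open List

/-- all Bool lists of length m -/
def lists : ℕ → Finset (List Bool)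
  | 0 => {[]}
  | m+1 => (lists m).image (List.cons true) ∪ (lists m).image (List.cons false)

lemma mem_lists {z : List Bool} {m : ℕ} : z ∈ lists m ↔ z.length = m := by
  induction m generalizing z with
  | zero => simp [lists, List.length_eq_zero_iff]
  | succ m ih =>
    cases z with
    | nil => simp [lists]
    | cons b z' => cases b <;> simp [lists, ih]

def strip (b : Bool) : List Bool → List Bool
  | [] => []
  | a :: x => if a = b then x else a :: x

lemma sublist_strip_iff (b : Bool) (x z : List Bool) : x <+ (b :: z) ↔ strip b x <+ z := by
  cases x with
  | nil => simp [strip]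
  | cons a x' =>
    by_cases h : a = b
    · subst h; simp [strip, List.cons_sublist_cons]
    · simp only [strip, if_neg h]
      constructor
      · intro hs
        cases hs with
        | cons _ h' => exact h'
        | cons_cons => exact absurd rfl h
      · intro hs; exact hs.cons b

def com (x y : List Bool) (m : ℕ) : Finset (List Bool) :=
  (lists m).filter (fun z => x.Sublist z ∧ y.Sublist z)

lemma mem_com {x y z : List Bool} {m : ℕ} :
    z ∈ com x y m ↔ z.length = m ∧ x <+ z ∧ y <+ z := by
  simp [com, mem_lists]

lemma com_comm (x y : List Bool) (m : ℕ) : com x y m = com y x m := by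
  ext z; simp [mem_com, and_comm]

lemma com_succ (x y : List Bool) (m : ℕ) :
    com x y (m+1) =
      ((com (strip true x) (strip true y) m).image (List.cons true)) ∪
      ((com (strip false x) (strip false y) m).image (List.cons false)) := by
  ext z
  cases z with
  | nil => simp [mem_com]
  | cons b z' =>
    cases b <;>
      simp [mem_com, Finset.mem_union, Finset.mem_image, sublist_strip_iff] 

lemma card_com_succ (x y : List Bool) (m : ℕ) :
    (com x y (m+1)).card =
      (com (strip true x) (strip true y) m).card +
      (com (strip false x) (strip false y) m).card := by
  rw [com_succ, Finset.card_union_of_disjoint, Finset.card_image_of_injective _ List.cons_injective,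
    Finset.card_image_of_injective _ List.cons_injective]
  simp [Finset.disjoint_left]

/-- z with |z| = |v| containing v must equal v -/
lemma com_subset_right (u v : List Bool) : com u v v.length ⊆ {v} := by
  intro z hz
  rw [mem_com] at hz
  simp [(hz.2.2.eq_of_length (by omega)).symm]

lemma com_subset_left (u v : List Bool) : com u v u.length ⊆ {u} := by
  rw [com_comm]; exact com_subset_right v u

lemma card_le_one_right (u v : List Bool) : (com u v v.length).card ≤ 1 := by
  calc (com u v v.length).card ≤ ({v} : Finset (List Bool)).card :=
        Finset.card_le_card (com_subset_right u v)
    _ = 1 := Finset.card_singleton v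

lemma card_le_one_left (u v : List Bool) : (com u v u.length).card ≤ 1 := by
  rw [com_comm]; exact card_le_one_right v u

lemma com_eq_empty_right (u v : List Bool) (h : ¬ u <+ v) : com u v v.length = ∅ := by
  ext z
  simp only [Finset.notMem_empty, iff_false, mem_com]
  rintro ⟨hl, hu, hv⟩
  exact h ((hv.eq_of_length (by omega)) ▸ hu)

lemma com_ne_cases (x y : List Bool) (hxy : x ≠ y) (hl : x.length = y.length) :
    com x y y.length = ∅ := by
  apply com_eq_empty_right
  intro h
  exact hxy (h.eq_of_length hl)

/-- mono -/
lemma com_subset_diag_right (u v : List Bool) (m : ℕ) : com u v m ⊆ com v v m := by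
  intro z hz; rw [mem_com] at *; exact ⟨hz.1, hz.2.2, hz.2.2⟩

lemma com_subset_diag_left (u v : List Bool) (m : ℕ) : com u v m ⊆ com u u m := by
  intro z hz; rw [mem_com] at *; exact ⟨hz.1, hz.2.1, hz.2.1⟩

lemma com_self_len (x : List Bool) : com x x x.length = {x} := by
  apply Finset.Subset.antisymm (com_subset_right x x)
  simp [mem_com]

/-- L1: number of 1-supersequences -/
lemma card_com_self (x : List Bool) : (com x x (x.length + 1)).card = x.length + 2 := by
  induction x with
  | nil => decide
  | cons a x' ih =>
    rw [show (a :: x').length + 1 = (a :: x').length + 1 from rfl, card_com_succ]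
    cases a
    · rw [show strip false (false :: x') = x' from rfl,
        show strip true (false :: x') = false :: x' from rfl]
      rw [show (false :: x').length = x'.length + 1 from rfl]
      rw [show com x' x' (x'.length + 1) = com x' x' (x'.length + 1) from rfl]
      have h1 : (com (false :: x') (false :: x') (x'.length + 1)).card = 1 := by
        rw [show x'.length + 1 = (false :: x').length from rfl, com_self_len]
        simp
      rw [h1, ih]; omega
    · rw [show strip true (true :: x') = x' from rfl,
        show strip false (true :: x') = true :: x' from rfl]
      rw [show (true :: x').length = x'.length + 1 from rfl]
      have h1 : (com (true :: x') (true :: x') (x'.length + 1)).card = 1 := by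
        rw [show x'.length + 1 = (true :: x').length from rfl, com_self_len]
        simp
      rw [h1, ih]

lemma strip_same (b : Bool) (x : List Bool) : strip b (b :: x) = x := by
  cases b <;> rfl

lemma strip_ne (b : Bool) (x : List Bool) : strip b ((!b) :: x) = (!b) :: x := by
  cases b <;> rfl

lemma strip_tt (x : List Bool) : strip true (true :: x) = x := rfl
lemma strip_tf (x : List Bool) : strip true (false :: x) = false :: x := rfl
lemma strip_ft (x : List Bool) : strip false (true :: x) = true :: x := rfl
lemma strip_ff (x : List Bool) : strip false (false :: x) = x := rfl

/-- L2: two distinct equal-length words have at most 2 common 1-supersequences -/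
lemma card_com_le_two : ∀ (y x : List Bool), x ≠ y → x.length = y.length →
    (com x y (y.length + 1)).card ≤ 2 := by
  intro y
  induction y with
  | nil =>
    intro x hxy hl
    exact absurd (List.length_eq_zero_iff.mp hl) hxy
  | cons b y' ih =>
    intro x hxy hl
    cases x with
    | nil => simp at hl
    | cons a x' =>
      rw [show (b :: y').length + 1 = (y'.length + 1) + 1 from rfl, card_com_succ]
      have hlen' : x'.length = y'.length := by simpa using hl
      cases a <;> cases b <;>
        simp only [strip_tt, strip_tf, strip_ft, strip_ff]
      · -- a = b = false : terms (x,y) at len y  and (x',y')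
        have h1 : (com x' y' (y'.length + 1)).card ≤ 2 :=
          ih x' (fun h => hxy (by rw [h])) hlen'
        have h2 : (com (false :: x') (false :: y') (y'.length + 1)).card = 0 := by
          rw [show y'.length + 1 = (false :: y').length from rfl,
            com_ne_cases _ _ hxy (by simpa using hl)]
          rfl
        omega
      · -- a = false, b = true
        have h1 : (com (false :: x') y' (y'.length + 1)).card ≤ 1 := by
          rw [show y'.length + 1 = (false :: x').length from by simp [hlen']]
          exact card_le_one_left _ _
        have h2 : (com x' (true :: y') (y'.length + 1)).card ≤ 1 := by
          rw [show y'.length + 1 = (true :: y').length from rfl]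
          exact card_le_one_right _ _
        omega
      · -- a = true, b = false
        have h1 : (com x' (false :: y') (y'.length + 1)).card ≤ 1 := by
          rw [show y'.length + 1 = (false :: y').length from rfl]
          exact card_le_one_right _ _
        have h2 : (com (true :: x') y' (y'.length + 1)).card ≤ 1 := by
          rw [show y'.length + 1 = (true :: x').length from by simp [hlen']]
          exact card_le_one_left _ _
        omega
      · -- a = b = true
        have h1 : (com x' y' (y'.length + 1)).card ≤ 2 :=
          ih x' (fun h => hxy (by rw [h])) hlen'
        have h2 : (com (true :: x') (true :: y') (y'.length + 1)).card = 0 := by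
          rw [show y'.length + 1 = (true :: y').length from rfl,
            com_ne_cases _ _ hxy (by simpa using hl)]
          rfl
        omega

/-- L3 -/
lemma card_com_le_three : ∀ (u v : List Bool), u.length + 1 = v.length → ¬ u <+ v →
    (com u v (v.length + 1)).card ≤ 3 := by
  intro u
  induction u with
  | nil => intro v _ hs; exact absurd (List.nil_sublist v) hs
  | cons a u' ih =>
    intro v hlen hs
    cases v with
    | nil => simp at hlen
    | cons b v' =>
      rw [show (b :: v').length + 1 = (v'.length + 1) + 1 from rfl, card_com_succ]
      have hlen' : u'.length + 1 = v'.length := by simpa using hlen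
      cases a <;> cases b <;> simp only [strip_tt, strip_tf, strip_ft, strip_ff]
      · -- a = b = false
        have h1 : (com u' v' (v'.length + 1)).card ≤ 3 := by
          apply ih v' hlen'
          intro h; exact hs (List.cons_sublist_cons.mpr h)
        have h2 : (com (false :: u') (false :: v') (v'.length + 1)).card = 0 := by
          rw [show v'.length + 1 = (false :: v').length from rfl, com_eq_empty_right _ _ hs]
          rfl
        omega
      · -- a = false, b = true: terms: c=true: com (false::u') v' ; c=false: com u' (true::v')
        have h1 : (com (false :: u') v' (v'.length + 1)).card ≤ 2 := by
          have hne : (false :: u') ≠ v' := by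
            intro h
            exact hs (h ▸ (List.sublist_cons_self true v'))
          have := card_com_le_two v' (false :: u') hne (by simpa using hlen')
          simpa using this
        have h2 : (com u' (true :: v') (v'.length + 1)).card ≤ 1 := by
          rw [show v'.length + 1 = (true :: v').length from rfl]
          exact card_le_one_right _ _
        omega
      · -- a = true, b = false
        have h1 : (com (true :: u') v' (v'.length + 1)).card ≤ 2 := by
          have hne : (true :: u') ≠ v' := by
            intro h
            exact hs (h ▸ (List.sublist_cons_self false v'))
          have := card_com_le_two v' (true :: u') hne (by simpa using hlen')
          simpa using this
        have h2 : (com u' (false :: v') (v'.length + 1)).card ≤ 1 := by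
          rw [show v'.length + 1 = (false :: v').length from rfl]
          exact card_le_one_right _ _
        omega
      · -- a = b = true
        have h1 : (com u' v' (v'.length + 1)).card ≤ 3 := by
          apply ih v' hlen'
          intro h; exact hs (List.cons_sublist_cons.mpr h)
        have h2 : (com (true :: u') (true :: v') (v'.length + 1)).card = 0 := by
          rw [show v'.length + 1 = (true :: v').length from rfl, com_eq_empty_right _ _ hs]
          rfl
        omega

lemma one_le_card_of_sublist_right {u v : List Bool} (h : u <+ v) :
    1 ≤ (com u v v.length).card :=
  Finset.one_le_card.mpr ⟨v, mem_com.mpr ⟨rfl, h, List.Sublist.refl v⟩⟩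

lemma one_le_card_of_sublist_left {u v : List Bool} (h : v <+ u) :
    1 ≤ (com u v u.length).card :=
  Finset.one_le_card.mpr ⟨u, mem_com.mpr ⟨rfl, List.Sublist.refl u, h⟩⟩

/-- helper for the differing-first-character case of L4 -/
lemma L4_neq (x y x' y' : List Bool)
    (h1 : x'.length + 1 = y.length) (h2 : y'.length + 1 = x.length)
    (hl : x.length = y.length)
    (hyp : (com x' y y.length).card + (com x y' y.length).card ≤ 1) :
    (com x' y (y.length + 1)).card + (com x y' (y.length + 1)).card ≤ y.length + 5 := by
  have hTcomm : com x y' (y.length + 1) = com y' x (x.length + 1) := by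
    rw [com_comm, hl]
  by_cases hxy : x' <+ y
  · -- then y' is not a sublist of x
    have hyx : ¬ y' <+ x := by
      intro hyx
      have m1 := one_le_card_of_sublist_right hxy
      have m2 : 1 ≤ (com x y' y.length).card := by
        rw [← hl]; exact one_le_card_of_sublist_left hyx
      omega
    have T1 : (com x' y (y.length + 1)).card ≤ y.length + 2 := by
      calc (com x' y (y.length + 1)).card ≤ (com y y (y.length + 1)).card :=
            Finset.card_le_card (com_subset_diag_right _ _ _)
        _ = y.length + 2 := card_com_self y
    have T2 : (com x y' (y.length + 1)).card ≤ 3 := by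
      rw [hTcomm]; exact card_com_le_three y' x h2 hyx
    omega
  · have T1 : (com x' y (y.length + 1)).card ≤ 3 := card_com_le_three x' y h1 hxy
    by_cases hyx : y' <+ x
    · have T2 : (com x y' (y.length + 1)).card ≤ x.length + 2 := by
        rw [hTcomm]
        calc (com y' x (x.length + 1)).card ≤ (com x x (x.length + 1)).card :=
              Finset.card_le_card (com_subset_diag_right _ _ _)
          _ = x.length + 2 := card_com_self x
      omega
    · have T2 : (com x y' (y.length + 1)).card ≤ 3 := by
        rw [hTcomm]; exact card_com_le_three y' x h2 hyx
      omega

/-- L4: if at most one common 1-supersequence then at most n+5 common 2-supersequences -/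
lemma card_com_main : ∀ (y x : List Bool), x ≠ y → x.length = y.length →
    (com x y (y.length + 1)).card ≤ 1 → (com x y (y.length + 2)).card ≤ y.length + 5 := by
  intro y
  induction y with
  | nil => intro x hxy hl _; exact absurd (List.length_eq_zero_iff.mp hl) hxy
  | cons b y' ih =>
    intro x hxy hl hyp
    have hyp0 := hyp
    cases x with
    | nil => simp at hl
    | cons a x' =>
      have hlen' : x'.length = y'.length := by simpa using hl
      rw [show (b :: y').length + 2 = (y'.length + 2) + 1 from rfl, card_com_succ]
      rw [show (b :: y').length + 1 = (y'.length + 1) + 1 from rfl, card_com_succ] at hyp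
      cases a <;> cases b <;>
        simp only [strip_tt, strip_tf, strip_ft, strip_ff] at hyp ⊢
      · -- a = b = false
        have hz : (com (false :: x') (false :: y') (y'.length + 1)).card = 0 := by
          rw [show y'.length + 1 = (false :: y').length from rfl,
            com_ne_cases _ _ hxy (by simpa using hl)]
          rfl
        have hx'y' : x' ≠ y' := fun h => hxy (by rw [h])
        have ih1 : (com x' y' (y'.length + 2)).card ≤ y'.length + 5 :=
          ih x' hx'y' hlen' (by omega)
        -- second summand: com (false::x')(false::y') at length y'.length+2 = y.length+1
        have hsec : (com (false :: x') (false :: y') (y'.length + 2)).card ≤ 1 := by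
          simpa using hyp0
        simp only [List.length_cons]
        omega
      · -- a = false, b = true
        have : (com x' (true :: y') (y'.length + 2)).card +
            (com (false :: x') y' (y'.length + 2)).card ≤ (true :: y').length + 5 := by
          apply L4_neq (false :: x') (true :: y') x' y' (by simp [hlen']) (by simp [hlen'])
            (by simpa using hl)
          simp only [List.length_cons]
          omega
        simp only [List.length_cons] at this ⊢
        omega
      · -- a = true, b = false
        have : (com x' (false :: y') (y'.length + 2)).card +
            (com (true :: x') y' (y'.length + 2)).card ≤ (false :: y').length + 5 := by
          apply L4_neq (true :: x') (false :: y') x' y' (by simp [hlen']) (by simp [hlen'])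
            (by simpa using hl)
          simp only [List.length_cons]
          omega
        simp only [List.length_cons] at this ⊢
        omega
      · -- a = b = true
        have hz : (com (true :: x') (true :: y') (y'.length + 1)).card = 0 := by
          rw [show y'.length + 1 = (true :: y').length from rfl,
            com_ne_cases _ _ hxy (by simpa using hl)]
          rfl
        have hx'y' : x' ≠ y' := fun h => hxy (by rw [h])
        have ih1 : (com x' y' (y'.length + 2)).card ≤ y'.length + 5 :=
          ih x' hx'y' hlen' (by omega)
        have hsec : (com (true :: x') (true :: y') (y'.length + 2)).card ≤ 1 := by
          simpa using hyp0
        simp only [List.length_cons]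
        omega

/-- L5: two common 1-supersequences force at least 2n+4 common 2-supersequences -/
lemma card_com_big (x y : List Bool) (n : ℕ) (hx : x.length = n) (hy : y.length = n)
    (h2 : 2 ≤ (com x y (n + 1)).card) : 2 * n + 4 ≤ (com x y (n + 2)).card := by
  obtain ⟨s, hs, t, ht, hst⟩ := Finset.one_lt_card.mp h2
  rw [mem_com] at hs ht
  obtain ⟨hsl, hxs, hys⟩ := hs
  obtain ⟨htl, hxt, hyt⟩ := ht
  set A := com s s (n + 2) with hA
  set B := com t t (n + 2) with hB
  have hsub : A ∪ B ⊆ com x y (n + 2) := by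
    intro z hz
    rw [Finset.mem_union] at hz
    rw [mem_com]
    rcases hz with hz | hz <;> rw [mem_com] at hz
    · exact ⟨hz.1, hxs.trans hz.2.1, hys.trans hz.2.1⟩
    · exact ⟨hz.1, hxt.trans hz.2.1, hyt.trans hz.2.1⟩
  have hint : A ∩ B ⊆ com s t (n + 2) := by
    intro z hz
    rw [Finset.mem_inter] at hz
    obtain ⟨hz1, hz2⟩ := hz
    rw [hA, mem_com] at hz1
    rw [hB, mem_com] at hz2
    rw [mem_com]
    exact ⟨hz1.1, hz1.2.1, hz2.2.1⟩
  have hcardA : A.card = n + 3 := by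
    have := card_com_self s
    rw [hsl] at this
    simpa [hA] using this
  have hcardB : B.card = n + 3 := by
    have := card_com_self t
    rw [htl] at this
    simpa [hB] using this
  have hint2 : (com s t (n + 2)).card ≤ 2 := by
    have := card_com_le_two t s hst (by omega)
    rw [htl] at this
    simpa using this
  have h1 := Finset.card_union_add_card_inter A B
  have h2 := Finset.card_le_card hsub
  have h3 := Finset.card_le_card hint
  omega

theorem stmt7 (n N : ℕ) (hn : 4 ≤ n) (hN1 : n + 5 < N) (hN2 : N ≤ 2 * n + 4)
    (C : Set (List Bool)) (hC : ∀ x ∈ C, x.length = n) :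
    (∀ x ∈ C, ∀ y ∈ C, x ≠ y → (insBall 2 x ∩ insBall 2 y).ncard < N) ↔
    (∀ x ∈ C, ∀ y ∈ C, x ≠ y → (insBall 1 x ∩ insBall 1 y).ncard < 2) := by
  have key : ∀ x ∈ C, ∀ y ∈ C, x ≠ y →
      ((insBall 2 x ∩ insBall 2 y).ncard < N ↔ (insBall 1 x ∩ insBall 1 y).ncard < 2) := by
    intro x hx y hy hxy
    have hxl := hC x hx
    have hyl := hC y hy
    have e2 : insBall 2 x ∩ insBall 2 y = ↑(com x y (n + 2)) := by
      ext z
      simp only [insBall, Set.mem_inter_iff, Set.mem_setOf_eq, Finset.mem_coe, mem_com,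
        hxl, hyl]
      tauto
    have e1 : insBall 1 x ∩ insBall 1 y = ↑(com x y (n + 1)) := by
      ext z
      simp only [insBall, Set.mem_inter_iff, Set.mem_setOf_eq, Finset.mem_coe, mem_com,
        hxl, hyl]
      tauto
    rw [e1, e2, Set.ncard_coe_finset, Set.ncard_coe_finset]
    constructor
    · intro h
      by_contra hcon
      have h2 : 2 ≤ (com x y (n + 1)).card := by omega
      have := card_com_big x y n hxl hyl h2
      omega
    · intro h
      have h1 : (com x y (n + 1)).card ≤ 1 := by omega
      have hmain := card_com_main y x hxy (hxl.trans hyl.symm) (by rw [hyl]; exact h1)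
      rw [hyl] at hmain
      omega
  constructor
  · intro h x hx y hy hxy; exact (key x hx y hy hxy).mp (h x hx y hy hxy)
  · intro h x hx y hy hxy; exact (key x hx y hy hxy).mpr (h x hx y hy hxy)
end

section
/- Let n ≥ 4 and let N be an integer with 6 < N ≤ n + 3. A code C ⊆ {0,1}^n satisfies |I_2(x) ∩ I_2(y)| < N for all distinct x, y ∈ C if and only if it satisfies |I_1(x) ∩ I_1(y)| = 0 for all distinct x, y ∈ C. -/
open List

/- ----------------- auxiliary lemmas ----------------- -/

lemma finiteLen : ∀ m : ℕ, {l : List Bool | l.length = m}.Finite := by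
  intro m
  induction m with
  | zero =>
    have h : {l : List Bool | l.length = 0} = {[]} := by
      ext l; simp [List.length_eq_zero_iff]
    rw [h]; exact Set.finite_singleton _
  | succ m ih =>
    have hsub : {l : List Bool | l.length = m + 1} ⊆
        (fun p : Bool × List Bool => p.1 :: p.2) '' (Set.univ ×ˢ {l | l.length = m}) := by
      intro l hl
      match l with
      | [] => simp at hl
      | a :: t =>
        exact ⟨(a, t), ⟨trivial, by simpa using hl⟩, rfl⟩
    exact ((Set.finite_univ.prod ih).image _).subset hsub

lemma finite_of_len {m : ℕ} {S : Set (List Bool)} (h : ∀ z ∈ S, z.length = m) : S.Finite :=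
  (finiteLen m).subset (fun z hz => h z hz)

lemma sublist_cases {a b : Bool} {x z : List Bool} (h : a :: x <+ b :: z) :
    a :: x <+ z ∨ (a = b ∧ x <+ z) := by
  cases h with
  | cons _ h => exact Or.inl h
  | cons_cons _ h => exact Or.inr ⟨rfl, h⟩

lemma tail_sub {a : Bool} {x z : List Bool} (h : a :: x <+ z) : x <+ z :=
  (List.sublist_cons_self a x).trans h

lemma bool_resolve {a b c : Bool} (hab : a ≠ b) (hca : c ≠ a) : c = b := by
  cases a <;> cases b <;> cases c <;> simp_all

lemma cons_inj (c : Bool) : Function.Injective (fun l : List Bool => c :: l) :=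
  fun a b h => by injection h

/-- If `u ≠ v` have equal length, they have at most 2 common supersequences
of length `|u| + 1`. -/
lemma lemL1 : ∀ (u v : List Bool), u.length = v.length → u ≠ v →
    {z : List Bool | z.length = u.length + 1 ∧ u <+ z ∧ v <+ z}.ncard ≤ 2 := by
  intro u
  induction u with
  | nil =>
    intro v hlen hne
    exact absurd (List.length_eq_zero_iff.mp hlen.symm).symm hne
  | cons c u' ih =>
    intro v hlen hne
    match v with
    | [] => simp at hlen
    | d :: v' =>
      by_cases hcd : c = d
      · subst hcd
        have hne' : u' ≠ v' := fun h => hne (by rw [h])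
        have hlen' : u'.length = v'.length := by simpa using hlen
        have hsub : {z : List Bool | z.length = (c :: u').length + 1 ∧ c :: u' <+ z ∧ c :: v' <+ z}
            ⊆ (fun t => c :: t) '' {z | z.length = u'.length + 1 ∧ u' <+ z ∧ v' <+ z} := by
          rintro z ⟨hzl, hu, hv⟩
          match z with
          | [] => simp at hzl
          | z0 :: z1 =>
            by_cases hz0 : z0 = c
            · subst hz0
              refine ⟨z1, ⟨by simpa using hzl, ?_, ?_⟩, rfl⟩
              · rcases sublist_cases hu with h | ⟨_, h⟩
                · exact tail_sub h
                · exact h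
              · rcases sublist_cases hv with h | ⟨_, h⟩
                · exact tail_sub h
                · exact h
            · exfalso
              have hu1 : c :: u' <+ z1 := by
                rcases sublist_cases hu with h | ⟨h, _⟩
                · exact h
                · exact absurd h.symm hz0
              have hv1 : c :: v' <+ z1 := by
                rcases sublist_cases hv with h | ⟨h, _⟩
                · exact h
                · exact absurd h.symm hz0
              have hlz : z1.length = (c :: u').length := by
                simp only [List.length_cons] at hzl ⊢; omega
              have e1 := hu1.eq_of_length hlz.symm
              have e2 := hv1.eq_of_length (by rw [hlz]; exact hlen.symm)
              exact hne (e1.trans e2.symm)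
        calc {z : List Bool | z.length = (c :: u').length + 1 ∧ c :: u' <+ z ∧ c :: v' <+ z}.ncard
            ≤ ((fun t => c :: t) '' {z | z.length = u'.length + 1 ∧ u' <+ z ∧ v' <+ z}).ncard :=
              Set.ncard_le_ncard hsub ((finite_of_len (fun z hz => hz.1)).image _)
          _ = {z : List Bool | z.length = u'.length + 1 ∧ u' <+ z ∧ v' <+ z}.ncard :=
              Set.ncard_image_of_injective _ (cons_inj c)
          _ ≤ 2 := ih v' hlen' hne'
      · have hsub : {z : List Bool | z.length = (c :: u').length + 1 ∧ c :: u' <+ z ∧ d :: v' <+ z}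
            ⊆ {c :: d :: v', d :: c :: u'} := by
          rintro z ⟨hzl, hu, hv⟩
          match z with
          | [] => simp at hzl
          | z0 :: z1 =>
            rw [Set.mem_insert_iff, Set.mem_singleton_iff]
            by_cases hz0 : z0 = c
            · subst hz0
              left
              have hv1 : d :: v' <+ z1 := by
                rcases sublist_cases hv with h | ⟨h, _⟩
                · exact h
                · exact absurd h.symm hcd
              have hlz : z1.length = (d :: v').length := by
                simp only [List.length_cons] at hzl hlen ⊢; omega
              rw [← hv1.eq_of_length hlz.symm]
            · have hz0d : z0 = d := bool_resolve hcd hz0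
              subst hz0d
              right
              have hu1 : c :: u' <+ z1 := by
                rcases sublist_cases hu with h | ⟨h, _⟩
                · exact h
                · exact absurd h hcd
              have hlz : z1.length = (c :: u').length := by
                simp only [List.length_cons] at hzl ⊢; omega
              rw [← hu1.eq_of_length hlz.symm]
        calc {z : List Bool | z.length = (c :: u').length + 1 ∧ c :: u' <+ z ∧ d :: v' <+ z}.ncard
            ≤ ({c :: d :: v', d :: c :: u'} : Set (List Bool)).ncard :=
              Set.ncard_le_ncard hsub ((Set.finite_singleton _).insert _)
          _ ≤ ({d :: c :: u'} : Set (List Bool)).ncard + 1 := Set.ncard_insert_le _ _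
          _ ≤ 2 := by rw [Set.ncard_singleton]

/-- If `|y| = |w| + 1` and `w` is not a sublist of `y`, then there are at most 3
common supersequences of `y` and `w` of length `|y| + 1`. -/
lemma lemD : ∀ (w y : List Bool), y.length = w.length + 1 → ¬ (w <+ y) →
    {z : List Bool | z.length = y.length + 1 ∧ y <+ z ∧ w <+ z}.ncard ≤ 3 := by
  intro w
  induction w with
  | nil => intro y _ hns; exact absurd (List.nil_sublist y) hns
  | cons e w' ih =>
    intro y hlen hns
    match y with
    | [] => simp at hlen
    | d :: y' =>
      by_cases hed : e = d
      · subst hed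
        have hns' : ¬ (w' <+ y') := fun h => hns (List.cons_sublist_cons.mpr h)
        have hlen' : y'.length = w'.length + 1 := by
          simp only [List.length_cons] at hlen; omega
        have hsub : {z : List Bool | z.length = (e :: y').length + 1 ∧ e :: y' <+ z ∧ e :: w' <+ z}
            ⊆ (fun t => e :: t) '' {z | z.length = y'.length + 1 ∧ y' <+ z ∧ w' <+ z} := by
          rintro z ⟨hzl, hy, hw⟩
          match z with
          | [] => simp at hzl
          | z0 :: z1 =>
            by_cases hz0 : z0 = e
            · subst hz0
              refine ⟨z1, ⟨by simpa using hzl, ?_, ?_⟩, rfl⟩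
              · rcases sublist_cases hy with h | ⟨_, h⟩
                · exact tail_sub h
                · exact h
              · rcases sublist_cases hw with h | ⟨_, h⟩
                · exact tail_sub h
                · exact h
            · exfalso
              have hy1 : e :: y' <+ z1 := by
                rcases sublist_cases hy with h | ⟨h, _⟩
                · exact h
                · exact absurd h.symm hz0
              have hw1 : e :: w' <+ z1 := by
                rcases sublist_cases hw with h | ⟨h, _⟩
                · exact h
                · exact absurd h.symm hz0
              have hlz : z1.length = (e :: y').length := by
                simp only [List.length_cons] at hzl ⊢; omega
              have e1 := hy1.eq_of_length hlz.symm
              exact hns (e1 ▸ hw1)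
        calc {z : List Bool | z.length = (e :: y').length + 1 ∧ e :: y' <+ z ∧ e :: w' <+ z}.ncard
            ≤ ((fun t => e :: t) '' {z | z.length = y'.length + 1 ∧ y' <+ z ∧ w' <+ z}).ncard :=
              Set.ncard_le_ncard hsub ((finite_of_len (fun z hz => hz.1)).image _)
          _ = {z : List Bool | z.length = y'.length + 1 ∧ y' <+ z ∧ w' <+ z}.ncard :=
              Set.ncard_image_of_injective _ (cons_inj e)
          _ ≤ 3 := ih y' hlen' hns'
      · -- e ≠ d
        have hwy' : e :: w' ≠ y' := by
          intro h
          exact hns (h ▸ List.sublist_cons_self d y')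
        have hlw : (e :: w').length = y'.length := by
          simp only [List.length_cons] at hlen ⊢; omega
        have hsub : {z : List Bool | z.length = (d :: y').length + 1 ∧ d :: y' <+ z ∧ e :: w' <+ z}
            ⊆ insert (e :: d :: y')
              ((fun t => d :: t) '' {z | z.length = (e :: w').length + 1 ∧ e :: w' <+ z ∧ y' <+ z}) := by
          rintro z ⟨hzl, hy, hw⟩
          match z with
          | [] => simp at hzl
          | z0 :: z1 =>
            rw [Set.mem_insert_iff]
            by_cases hz0 : z0 = d
            · subst hz0
              right
              refine ⟨z1, ⟨?_, ?_, ?_⟩, rfl⟩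
              · simp only [List.length_cons] at hzl hlw ⊢; omega
              · rcases sublist_cases hw with h | ⟨h, _⟩
                · exact h
                · exact absurd h hed
              · rcases sublist_cases hy with h | ⟨_, h⟩
                · exact tail_sub h
                · exact h
            · have hz0e : z0 = e := bool_resolve (Ne.symm hed) hz0
              subst hz0e
              left
              have hy1 : d :: y' <+ z1 := by
                rcases sublist_cases hy with h | ⟨h, _⟩
                · exact h
                · exact absurd h.symm hz0
              have hlz : z1.length = (d :: y').length := by
                simp only [List.length_cons] at hzl ⊢; omega
              rw [← hy1.eq_of_length hlz.symm]
        calc {z : List Bool | z.length = (d :: y').length + 1 ∧ d :: y' <+ z ∧ e :: w' <+ z}.ncard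
            ≤ (insert (e :: d :: y')
              ((fun t => d :: t) '' {z | z.length = (e :: w').length + 1 ∧ e :: w' <+ z ∧ y' <+ z})).ncard :=
              Set.ncard_le_ncard hsub
                (((finite_of_len (fun z hz => hz.1)).image _).insert _)
          _ ≤ ((fun t => d :: t) '' {z | z.length = (e :: w').length + 1 ∧ e :: w' <+ z ∧ y' <+ z}).ncard + 1 :=
              Set.ncard_insert_le _ _
          _ = {z : List Bool | z.length = (e :: w').length + 1 ∧ e :: w' <+ z ∧ y' <+ z}.ncard + 1 := by
              rw [Set.ncard_image_of_injective _ (cons_inj d)]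
          _ ≤ 3 := by
              have := lemL1 (e :: w') y' hlw hwy'
              omega

/-- If `x ≠ y` have equal length and no common supersequence of length `|x| + 1`,
then they have at most 6 common supersequences of length `|x| + 2`. -/
lemma claim2 : ∀ (x y : List Bool), x.length = y.length → x ≠ y →
    (∀ v : List Bool, v.length = x.length + 1 → ¬ (x <+ v ∧ y <+ v)) →
    {z : List Bool | z.length = x.length + 2 ∧ x <+ z ∧ y <+ z}.ncard ≤ 6 := by
  intro x
  induction x with
  | nil =>
    intro y hlen hne _
    exact absurd (List.length_eq_zero_iff.mp hlen.symm).symm hne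
  | cons c x' ih =>
    intro y hlen hne hnc
    match y with
    | [] => simp at hlen
    | d :: y' =>
      by_cases hcd : c = d
      · subst hcd
        have hne' : x' ≠ y' := fun h => hne (by rw [h])
        have hlen' : x'.length = y'.length := by simpa using hlen
        have hnc' : ∀ v : List Bool, v.length = x'.length + 1 → ¬ (x' <+ v ∧ y' <+ v) := by
          rintro v hv ⟨h1, h2⟩
          exact hnc (c :: v) (by simp [hv])
            ⟨List.cons_sublist_cons.mpr h1, List.cons_sublist_cons.mpr h2⟩
        have hsub : {z : List Bool | z.length = (c :: x').length + 2 ∧ c :: x' <+ z ∧ c :: y' <+ z}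
            ⊆ (fun t => c :: t) '' {z | z.length = x'.length + 2 ∧ x' <+ z ∧ y' <+ z} := by
          rintro z ⟨hzl, hx, hy⟩
          match z with
          | [] => simp at hzl
          | z0 :: z1 =>
            by_cases hz0 : z0 = c
            · subst hz0
              refine ⟨z1, ⟨by simpa using hzl, ?_, ?_⟩, rfl⟩
              · rcases sublist_cases hx with h | ⟨_, h⟩
                · exact tail_sub h
                · exact h
              · rcases sublist_cases hy with h | ⟨_, h⟩
                · exact tail_sub h
                · exact h
            · exfalso
              have hx1 : c :: x' <+ z1 := by
                rcases sublist_cases hx with h | ⟨h, _⟩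
                · exact h
                · exact absurd h.symm hz0
              have hy1 : c :: y' <+ z1 := by
                rcases sublist_cases hy with h | ⟨h, _⟩
                · exact h
                · exact absurd h.symm hz0
              exact hnc z1 (by simp only [List.length_cons] at hzl ⊢; omega) ⟨hx1, hy1⟩
        calc {z : List Bool | z.length = (c :: x').length + 2 ∧ c :: x' <+ z ∧ c :: y' <+ z}.ncard
            ≤ ((fun t => c :: t) '' {z | z.length = x'.length + 2 ∧ x' <+ z ∧ y' <+ z}).ncard :=
              Set.ncard_le_ncard hsub ((finite_of_len (fun z hz => hz.1)).image _)
          _ = {z : List Bool | z.length = x'.length + 2 ∧ x' <+ z ∧ y' <+ z}.ncard :=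
              Set.ncard_image_of_injective _ (cons_inj c)
          _ ≤ 6 := ih y' hlen' hne' hnc'
      · -- c ≠ d : heads differ
        have hx'y : ¬ (x' <+ d :: y') := by
          intro h
          exact hnc (c :: d :: y') (by simp only [List.length_cons] at hlen ⊢; omega)
            ⟨List.cons_sublist_cons.mpr h, (d :: y').sublist_cons_self c⟩
        have hy'x : ¬ (y' <+ c :: x') := by
          intro h
          exact hnc (d :: c :: x') (by simp)
            ⟨(c :: x').sublist_cons_self d, List.cons_sublist_cons.mpr h⟩
        have hlenA : (d :: y').length = x'.length + 1 := by
          simp only [List.length_cons] at hlen ⊢; omega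
        have hlenB : (c :: x').length = y'.length + 1 := by
          simp only [List.length_cons] at hlen ⊢; omega
        have hA := lemD x' (d :: y') hlenA hx'y
        have hB := lemD y' (c :: x') hlenB hy'x
        have hsub : {z : List Bool | z.length = (c :: x').length + 2 ∧ c :: x' <+ z ∧ d :: y' <+ z}
            ⊆ (fun t => c :: t) '' {z | z.length = (d :: y').length + 1 ∧ d :: y' <+ z ∧ x' <+ z}
              ∪ (fun t => d :: t) '' {z | z.length = (c :: x').length + 1 ∧ c :: x' <+ z ∧ y' <+ z} := by
          rintro z ⟨hzl, hx, hy⟩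
          match z with
          | [] => simp at hzl
          | z0 :: z1 =>
            by_cases hz0 : z0 = c
            · subst hz0
              left
              refine ⟨z1, ⟨?_, ?_, ?_⟩, rfl⟩
              · simp only [List.length_cons] at hzl hlen ⊢; omega
              · rcases sublist_cases hy with h | ⟨h, _⟩
                · exact h
                · exact absurd h.symm hcd
              · rcases sublist_cases hx with h | ⟨_, h⟩
                · exact tail_sub h
                · exact h
            · have hz0d : z0 = d := bool_resolve hcd hz0
              subst hz0d
              right
              refine ⟨z1, ⟨?_, ?_, ?_⟩, rfl⟩
              · simp only [List.length_cons] at hzl ⊢; omega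
              · rcases sublist_cases hx with h | ⟨h, _⟩
                · exact h
                · exact absurd h hcd
              · rcases sublist_cases hy with h | ⟨_, h⟩
                · exact tail_sub h
                · exact h
        calc {z : List Bool | z.length = (c :: x').length + 2 ∧ c :: x' <+ z ∧ d :: y' <+ z}.ncard
            ≤ ((fun t => c :: t) '' {z | z.length = (d :: y').length + 1 ∧ d :: y' <+ z ∧ x' <+ z}
              ∪ (fun t => d :: t) '' {z | z.length = (c :: x').length + 1 ∧ c :: x' <+ z ∧ y' <+ z}).ncard :=
              Set.ncard_le_ncard hsub
                (((finite_of_len (fun z hz => hz.1)).image _).union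
                  ((finite_of_len (fun z hz => hz.1)).image _))
          _ ≤ ((fun t => c :: t) '' {z | z.length = (d :: y').length + 1 ∧ d :: y' <+ z ∧ x' <+ z}).ncard
              + ((fun t => d :: t) '' {z | z.length = (c :: x').length + 1 ∧ c :: x' <+ z ∧ y' <+ z}).ncard :=
              Set.ncard_union_le _ _
          _ ≤ 6 := by
              rw [Set.ncard_image_of_injective _ (cons_inj c),
                Set.ncard_image_of_injective _ (cons_inj d)]
              omega

/-- If `x, y` of length `n` have a common supersequence of length `n + 1`, then they
have at least `n + 3` common supersequences of length `n + 2`. -/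
lemma claim1 {x y v : List Bool} {n : ℕ} (hv : v.length = n + 1)
    (hxv : x <+ v) (hyv : y <+ v) :
    n + 3 ≤ {z : List Bool | z.length = n + 2 ∧ x <+ z ∧ y <+ z}.ncard := by
  set f : ℕ → List Bool :=
    fun i => v.take i ++ (if i = n + 2 then false else !(v.getD i false)) :: v.drop i with hf
  have hvf : ∀ i, v <+ f i := by
    intro i
    simp only [hf]
    conv_lhs => rw [← List.take_append_drop i v]
    exact List.Sublist.append_left (List.sublist_cons_self _ _) _
  have hlenf : ∀ i, i ≤ n + 2 → (f i).length = n + 2 := by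
    intro i hi
    simp only [hf, List.length_append, List.length_cons, List.length_take, List.length_drop, hv]
    omega
  have hgd1 : ∀ i, i ≤ n + 1 → (f i).getD i false = !(v.getD i false) := by
    intro i hi
    have ht : (v.take i).length = i := by rw [List.length_take, hv]; omega
    simp only [hf]
    rw [List.getD_append_right _ _ _ _ (le_of_eq ht)]
    rw [ht, Nat.sub_self, List.getD_cons_zero]
    rw [if_neg (by omega)]
  have hgd2 : ∀ i j, i < j → j ≤ n + 2 → (f j).getD i false = v.getD i false := by
    intro i j hij hj
    by_cases hlt : i < (v.take j).length
    · simp only [hf]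
      rw [List.getD_append _ _ _ _ hlt]
      conv_rhs => rw [← List.take_append_drop j v]
      rw [List.getD_append _ _ _ _ hlt]
    · have hlt' : (v.take j).length ≤ i := by omega
      have htl : (v.take j).length = min j (n + 1) := by rw [List.length_take, hv]
      have hieq : i = n + 1 := by omega
      have hjeq : j = n + 2 := by omega
      simp only [hf]
      rw [List.getD_append_right _ _ _ _ hlt']
      have h0 : i - (v.take j).length = 0 := by omega
      rw [h0, List.getD_cons_zero, if_pos hjeq]
      rw [List.getD_eq_default _ _ (by omega)]
  have hfne : ∀ i j, i < j → j ≤ n + 2 → f i ≠ f j := by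
    intro i j hij hj heq
    have h1 := hgd1 i (by omega)
    have h2 := hgd2 i j hij hj
    rw [heq, h2] at h1
    simp at h1
  have hcard : ((Finset.range (n + 3)).image f).card = n + 3 := by
    rw [Finset.card_image_of_injOn, Finset.card_range]
    intro i hi j hj hij
    simp only [Finset.coe_range, Set.mem_Iio] at hi hj
    rcases lt_trichotomy i j with h | h | h
    · exact absurd hij (hfne i j h (by omega))
    · exact h
    · exact absurd hij.symm (hfne j i h (by omega))
  have hsubS : ↑((Finset.range (n + 3)).image f) ⊆
      {z : List Bool | z.length = n + 2 ∧ x <+ z ∧ y <+ z} := by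
    intro z hz
    simp only [Finset.coe_image, Finset.coe_range, Set.mem_image, Set.mem_Iio] at hz
    obtain ⟨i, hi, rfl⟩ := hz
    exact ⟨hlenf i (by omega), hxv.trans (hvf i), hyv.trans (hvf i)⟩
  have hfin : {z : List Bool | z.length = n + 2 ∧ x <+ z ∧ y <+ z}.Finite :=
    finite_of_len (fun z hz => hz.1)
  have hle := Set.ncard_le_ncard hsubS hfin
  rwa [Set.ncard_coe_finset, hcard] at hle

theorem stmt8 (n N : ℕ) (hn : 4 ≤ n) (hN1 : 6 < N) (hN2 : N ≤ n + 3)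
    (C : Set (List Bool)) (hC : ∀ x ∈ C, x.length = n) :
    (∀ x ∈ C, ∀ y ∈ C, x ≠ y → (insBall 2 x ∩ insBall 2 y).ncard < N) ↔
    (∀ x ∈ C, ∀ y ∈ C, x ≠ y → (insBall 1 x ∩ insBall 1 y).ncard = 0) := by
  have hset2 : ∀ x ∈ C, ∀ y ∈ C,
      insBall 2 x ∩ insBall 2 y = {z : List Bool | z.length = n + 2 ∧ x <+ z ∧ y <+ z} := by
    intro x hx y hy
    ext z
    simp only [insBall, Set.mem_inter_iff, Set.mem_setOf_eq, hC x hx, hC y hy]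
    tauto
  constructor
  · intro h x hx y hy hxy
    have hempty : insBall 1 x ∩ insBall 1 y = ∅ := by
      rw [Set.eq_empty_iff_forall_notMem]
      rintro v ⟨⟨hv1, hv2⟩, ⟨hv3, hv4⟩⟩
      have hge := claim1 (x := x) (y := y) (n := n) (by rw [hv1, hC x hx]) hv2 hv4
      have hlt := h x hx y hy hxy
      rw [hset2 x hx y hy] at hlt
      omega
    rw [hempty, Set.ncard_empty]
  · intro h x hx y hy hxy
    have h0 := h x hx y hy hxy
    have hfin : (insBall 1 x ∩ insBall 1 y).Finite :=
      finite_of_len (m := n + 1) (fun z hz => by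
        have := hz.1.1
        rwa [hC x hx] at this)
    have hempty : insBall 1 x ∩ insBall 1 y = ∅ := (Set.ncard_eq_zero hfin).mp h0
    have hnc : ∀ v : List Bool, v.length = x.length + 1 → ¬ (x <+ v ∧ y <+ v) := by
      rintro v hv ⟨h1, h2⟩
      have : v ∈ insBall 1 x ∩ insBall 1 y :=
        ⟨⟨hv, h1⟩, ⟨by rw [hv, hC x hx, hC y hy], h2⟩⟩
      rw [hempty] at this
      exact this
    have h6 := claim2 x y (by rw [hC x hx, hC y hy]) hxy hnc
    rw [hset2 x hx y hy]
    have hxl : x.length = n := hC x hx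
    rw [hxl] at h6
    omega
end
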